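/- Let τ = (1+√5)/2 be the golden ratio and let G be the subgroup of the unit group ℍˣ of the real quaternions generated by all products p·q, where p and q range over the 30 pure unit quaternions ±i, ±j, ±k and all cyclic permutations of ½(±1·i ± τ·j ± τ⁻¹·k) (the unit roots of H₃). Then G — the binary icosahedral group 2I, the group of 120 rotors generated by the reflections of the icosahedral group — is isomorphic as a group to SL(2, ℤ/5ℤ). -/

import Mathlib

noncomputable section

/-- The golden ratio `τ = (1+√5)/2`. -/
def τ : ℝ := (1 + Real.sqrt 5) / 2

/-- The quaternion unit `i`. -/
def qi : Quaternion ℝ := ⟨0, 1, 0, 0⟩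
/-- The quaternion unit `j`. -/
def qj : Quaternion ℝ := ⟨0, 0, 1, 0⟩
/-- The quaternion unit `k`. -/
def qk : Quaternion ℝ := ⟨0, 0, 0, 1⟩

/-- The sign set `{1, -1}`. -/
def pm : Set ℝ := {1, -1}

/-- The 30 unit roots of `H₃`: `±i, ±j, ±k` together with all cyclic
permutations of the pure quaternions `½(±1·i ± τ·j ± τ⁻¹·k)`. -/
def rootsH3 : Set (Quaternion ℝ) :=
  {x | (∃ ε ∈ pm, x = ε • qi ∨ x = ε • qj ∨ x = ε • qk) ∨
    (∃ ε₁ ∈ pm, ∃ ε₂ ∈ pm, ∃ ε₃ ∈ pm,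
      (x = (2 : ℝ)⁻¹ • (ε₁ • qi + (ε₂ * τ) • qj + (ε₃ * τ⁻¹) • qk) ∨
       x = (2 : ℝ)⁻¹ • ((ε₃ * τ⁻¹) • qi + ε₁ • qj + (ε₂ * τ) • qk) ∨
       x = (2 : ℝ)⁻¹ • ((ε₂ * τ) • qi + (ε₃ * τ⁻¹) • qj + ε₁ • qk)))}

/-- The set of units of ℍ of the form `p·q` with `p, q` unit roots of `H₃`. -/
def rotorGenH3 : Set (Quaternion ℝ)ˣ :=
  {u | ∃ p ∈ rootsH3, ∃ q ∈ rootsH3, (u : Quaternion ℝ) = p * q}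

set_option linter.unusedTactic false
set_option linter.unreachableTactic false
set_option linter.unnecessarySeqFocus false
set_option linter.unusedVariables false
open scoped Quaternion
/-- `Gold R` = `R[τ]`, pairs `a + b·τ` with `τ² = τ + 1`. -/
@[ext] structure Gold (R : Type) where
  a : R
  b : R
deriving DecidableEq

namespace Gold
variable {R : Type} [CommRing R]

instance : Zero (Gold R) := ⟨⟨0,0⟩⟩
instance : One (Gold R) := ⟨⟨1,0⟩⟩
instance : Add (Gold R) := ⟨fun x y => ⟨x.a + y.a, x.b + y.b⟩⟩
instance : Neg (Gold R) := ⟨fun x => ⟨-x.a, -x.b⟩⟩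
instance : Mul (Gold R) := ⟨fun x y => ⟨x.a*y.a + x.b*y.b, x.a*y.b + x.b*y.a + x.b*y.b⟩⟩

@[simp] lemma zero_a : (0 : Gold R).a = 0 := rfl
@[simp] lemma zero_b : (0 : Gold R).b = 0 := rfl
@[simp] lemma one_a : (1 : Gold R).a = 1 := rfl
@[simp] lemma one_b : (1 : Gold R).b = 0 := rfl
@[simp] lemma add_a (x y : Gold R) : (x + y).a = x.a + y.a := rfl
@[simp] lemma add_b (x y : Gold R) : (x + y).b = x.b + y.b := rfl
@[simp] lemma neg_a (x : Gold R) : (-x).a = -x.a := rfl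
@[simp] lemma neg_b (x : Gold R) : (-x).b = -x.b := rfl
@[simp] lemma mul_a (x y : Gold R) : (x * y).a = x.a*y.a + x.b*y.b := rfl
@[simp] lemma mul_b (x y : Gold R) : (x * y).b = x.a*y.b + x.b*y.a + x.b*y.b := rfl

instance : CommRing (Gold R) where
  add_assoc x y z := by ext <;> simp <;> ring
  zero_add x := by ext <;> simp
  add_zero x := by ext <;> simp
  add_comm x y := by ext <;> simp <;> ring
  mul_assoc x y z := by ext <;> simp <;> ring
  one_mul x := by ext <;> simp
  mul_one x := by ext <;> simp
  left_distrib x y z := by ext <;> simp <;> ring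
  right_distrib x y z := by ext <;> simp <;> ring
  mul_comm x y := by ext <;> simp <;> ring
  neg_add_cancel x := by ext <;> simp
  zero_mul x := by ext <;> simp
  mul_zero x := by ext <;> simp
  nsmul := fun n x => ⟨n • x.a, n • x.b⟩
  nsmul_zero x := by ext <;> exact zero_smul ℕ _
  nsmul_succ n x := by ext <;> exact succ_nsmul _ n
  zsmul := fun n x => ⟨n • x.a, n • x.b⟩
  zsmul_zero' x := by ext <;> exact zero_smul ℤ _
  zsmul_succ' n x := by ext <;> exact SubNegMonoid.zsmul_succ' n _
  zsmul_neg' n x := by ext <;> exact SubNegMonoid.zsmul_neg' n _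

@[simp] lemma natCast_a (n : ℕ) : ((n : ℕ) : Gold R).a = n := by
  induction n with
  | zero => simp
  | succ k ih => rw [Nat.cast_succ, Nat.cast_succ, add_a, ih, one_a]
@[simp] lemma natCast_b (n : ℕ) : ((n : ℕ) : Gold R).b = 0 := by
  induction n with
  | zero => simp
  | succ k ih => rw [Nat.cast_succ, add_b, ih, one_b, add_zero]
@[simp] lemma intCast_a (n : ℤ) : ((n : ℤ) : Gold R).a = n := by
  cases n with
  | ofNat k => simp [Int.ofNat_eq_natCast]
  | negSucc k => rw [Int.cast_negSucc, neg_a, natCast_a, Int.cast_negSucc]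
@[simp] lemma intCast_b (n : ℤ) : ((n : ℤ) : Gold R).b = 0 := by
  cases n with
  | ofNat k => simp [Int.ofNat_eq_natCast]
  | negSucc k => rw [Int.cast_negSucc, neg_b, natCast_b, neg_zero]
@[simp] lemma ofNat_a (n : ℕ) [n.AtLeastTwo] :
    (OfNat.ofNat n : Gold R).a = OfNat.ofNat n := by
  rw [← Nat.cast_ofNat, natCast_a, Nat.cast_ofNat]
@[simp] lemma ofNat_b (n : ℕ) [n.AtLeastTwo] :
    (OfNat.ofNat n : Gold R).b = 0 := by
  rw [← Nat.cast_ofNat, natCast_b]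

/-- Lift a ring hom `R →+* A` plus a root of `x² = x + 1` to `Gold R →+* A`. -/
def lift {A : Type*} [CommRing A] (f : R →+* A) (t : A) (ht : t * t = t + 1) :
    Gold R →+* A where
  toFun x := f x.a + f x.b * t
  map_one' := by simp
  map_mul' x y := by
    simp only [mul_a, mul_b, map_add, map_mul]
    linear_combination (-(f x.b * f y.b)) * ht
  map_zero' := by simp
  map_add' x y := by simp; ring

end Gold

def qmk (a b c d e f g h : ℤ) : Quaternion (Gold ℤ) := ⟨⟨a,b⟩,⟨c,d⟩,⟨e,f⟩,⟨g,h⟩⟩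

def L₂ : List (Quaternion (Gold ℤ)) :=
[qmk (-2) (0) (0) (0) (0) (0) (0) (0),
 qmk (-1) (0) (-1) (0) (-1) (0) (-1) (0),
 qmk (-1) (0) (-1) (0) (-1) (0) (1) (0),
 qmk (-1) (0) (-1) (0) (1) (0) (-1) (0),
 qmk (-1) (0) (-1) (0) (1) (0) (1) (0),
 qmk (-1) (0) (-1) (1) (0) (-1) (0) (0),
 qmk (-1) (0) (-1) (1) (0) (1) (0) (0),
 qmk (-1) (0) (0) (-1) (0) (0) (-1) (1),
 qmk (-1) (0) (0) (-1) (0) (0) (1) (-1),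
 qmk (-1) (0) (0) (0) (-1) (1) (0) (-1),
 qmk (-1) (0) (0) (0) (-1) (1) (0) (1),
 qmk (-1) (0) (0) (0) (1) (-1) (0) (-1),
 qmk (-1) (0) (0) (0) (1) (-1) (0) (1),
 qmk (-1) (0) (0) (1) (0) (0) (-1) (1),
 qmk (-1) (0) (0) (1) (0) (0) (1) (-1),
 qmk (-1) (0) (1) (-1) (0) (-1) (0) (0),
 qmk (-1) (0) (1) (-1) (0) (1) (0) (0),
 qmk (-1) (0) (1) (0) (-1) (0) (-1) (0),
 qmk (-1) (0) (1) (0) (-1) (0) (1) (0),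
 qmk (-1) (0) (1) (0) (1) (0) (-1) (0),
 qmk (-1) (0) (1) (0) (1) (0) (1) (0),
 qmk (-1) (1) (-1) (0) (0) (0) (0) (-1),
 qmk (-1) (1) (-1) (0) (0) (0) (0) (1),
 qmk (-1) (1) (0) (-1) (-1) (0) (0) (0),
 qmk (-1) (1) (0) (-1) (1) (0) (0) (0),
 qmk (-1) (1) (0) (0) (0) (-1) (-1) (0),
 qmk (-1) (1) (0) (0) (0) (-1) (1) (0),
 qmk (-1) (1) (0) (0) (0) (1) (-1) (0),
 qmk (-1) (1) (0) (0) (0) (1) (1) (0),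
 qmk (-1) (1) (0) (1) (-1) (0) (0) (0),
 qmk (-1) (1) (0) (1) (1) (0) (0) (0),
 qmk (-1) (1) (1) (0) (0) (0) (0) (-1),
 qmk (-1) (1) (1) (0) (0) (0) (0) (1),
 qmk (0) (-1) (-1) (0) (-1) (1) (0) (0),
 qmk (0) (-1) (-1) (0) (1) (-1) (0) (0),
 qmk (0) (-1) (-1) (1) (0) (0) (-1) (0),
 qmk (0) (-1) (-1) (1) (0) (0) (1) (0),
 qmk (0) (-1) (0) (0) (-1) (0) (-1) (1),
 qmk (0) (-1) (0) (0) (-1) (0) (1) (-1),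
 qmk (0) (-1) (0) (0) (1) (0) (-1) (1),
 qmk (0) (-1) (0) (0) (1) (0) (1) (-1),
 qmk (0) (-1) (1) (-1) (0) (0) (-1) (0),
 qmk (0) (-1) (1) (-1) (0) (0) (1) (0),
 qmk (0) (-1) (1) (0) (-1) (1) (0) (0),
 qmk (0) (-1) (1) (0) (1) (-1) (0) (0),
 qmk (0) (0) (-2) (0) (0) (0) (0) (0),
 qmk (0) (0) (-1) (0) (0) (-1) (-1) (1),
 qmk (0) (0) (-1) (0) (0) (-1) (1) (-1),
 qmk (0) (0) (-1) (0) (0) (1) (-1) (1),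
 qmk (0) (0) (-1) (0) (0) (1) (1) (-1),
 qmk (0) (0) (-1) (1) (-1) (0) (0) (-1),
 qmk (0) (0) (-1) (1) (-1) (0) (0) (1),
 qmk (0) (0) (-1) (1) (1) (0) (0) (-1),
 qmk (0) (0) (-1) (1) (1) (0) (0) (1),
 qmk (0) (0) (0) (-1) (-1) (1) (-1) (0),
 qmk (0) (0) (0) (-1) (-1) (1) (1) (0),
 qmk (0) (0) (0) (-1) (1) (-1) (-1) (0),
 qmk (0) (0) (0) (-1) (1) (-1) (1) (0),
 qmk (0) (0) (0) (0) (-2) (0) (0) (0),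
 qmk (0) (0) (0) (0) (0) (0) (-2) (0),
 qmk (0) (0) (0) (0) (0) (0) (2) (0),
 qmk (0) (0) (0) (0) (2) (0) (0) (0),
 qmk (0) (0) (0) (1) (-1) (1) (-1) (0),
 qmk (0) (0) (0) (1) (-1) (1) (1) (0),
 qmk (0) (0) (0) (1) (1) (-1) (-1) (0),
 qmk (0) (0) (0) (1) (1) (-1) (1) (0),
 qmk (0) (0) (1) (-1) (-1) (0) (0) (-1),
 qmk (0) (0) (1) (-1) (-1) (0) (0) (1),
 qmk (0) (0) (1) (-1) (1) (0) (0) (-1),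
 qmk (0) (0) (1) (-1) (1) (0) (0) (1),
 qmk (0) (0) (1) (0) (0) (-1) (-1) (1),
 qmk (0) (0) (1) (0) (0) (-1) (1) (-1),
 qmk (0) (0) (1) (0) (0) (1) (-1) (1),
 qmk (0) (0) (1) (0) (0) (1) (1) (-1),
 qmk (0) (0) (2) (0) (0) (0) (0) (0),
 qmk (0) (1) (-1) (0) (-1) (1) (0) (0),
 qmk (0) (1) (-1) (0) (1) (-1) (0) (0),
 qmk (0) (1) (-1) (1) (0) (0) (-1) (0),
 qmk (0) (1) (-1) (1) (0) (0) (1) (0),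
 qmk (0) (1) (0) (0) (-1) (0) (-1) (1),
 qmk (0) (1) (0) (0) (-1) (0) (1) (-1),
 qmk (0) (1) (0) (0) (1) (0) (-1) (1),
 qmk (0) (1) (0) (0) (1) (0) (1) (-1),
 qmk (0) (1) (1) (-1) (0) (0) (-1) (0),
 qmk (0) (1) (1) (-1) (0) (0) (1) (0),
 qmk (0) (1) (1) (0) (-1) (1) (0) (0),
 qmk (0) (1) (1) (0) (1) (-1) (0) (0),
 qmk (1) (-1) (-1) (0) (0) (0) (0) (-1),
 qmk (1) (-1) (-1) (0) (0) (0) (0) (1),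
 qmk (1) (-1) (0) (-1) (-1) (0) (0) (0),
 qmk (1) (-1) (0) (-1) (1) (0) (0) (0),
 qmk (1) (-1) (0) (0) (0) (-1) (-1) (0),
 qmk (1) (-1) (0) (0) (0) (-1) (1) (0),
 qmk (1) (-1) (0) (0) (0) (1) (-1) (0),
 qmk (1) (-1) (0) (0) (0) (1) (1) (0),
 qmk (1) (-1) (0) (1) (-1) (0) (0) (0),
 qmk (1) (-1) (0) (1) (1) (0) (0) (0),
 qmk (1) (-1) (1) (0) (0) (0) (0) (-1),
 qmk (1) (-1) (1) (0) (0) (0) (0) (1),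
 qmk (1) (0) (-1) (0) (-1) (0) (-1) (0),
 qmk (1) (0) (-1) (0) (-1) (0) (1) (0),
 qmk (1) (0) (-1) (0) (1) (0) (-1) (0),
 qmk (1) (0) (-1) (0) (1) (0) (1) (0),
 qmk (1) (0) (-1) (1) (0) (-1) (0) (0),
 qmk (1) (0) (-1) (1) (0) (1) (0) (0),
 qmk (1) (0) (0) (-1) (0) (0) (-1) (1),
 qmk (1) (0) (0) (-1) (0) (0) (1) (-1),
 qmk (1) (0) (0) (0) (-1) (1) (0) (-1),
 qmk (1) (0) (0) (0) (-1) (1) (0) (1),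
 qmk (1) (0) (0) (0) (1) (-1) (0) (-1),
 qmk (1) (0) (0) (0) (1) (-1) (0) (1),
 qmk (1) (0) (0) (1) (0) (0) (-1) (1),
 qmk (1) (0) (0) (1) (0) (0) (1) (-1),
 qmk (1) (0) (1) (-1) (0) (-1) (0) (0),
 qmk (1) (0) (1) (-1) (0) (1) (0) (0),
 qmk (1) (0) (1) (0) (-1) (0) (-1) (0),
 qmk (1) (0) (1) (0) (-1) (0) (1) (0),
 qmk (1) (0) (1) (0) (1) (0) (-1) (0),
 qmk (1) (0) (1) (0) (1) (0) (1) (0),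
 qmk (2) (0) (0) (0) (0) (0) (0) (0)]

def R30 : List (Quaternion (Gold ℤ)) :=
[qmk (0) (0) (2) (0) (0) (0) (0) (0),
 qmk (0) (0) (0) (0) (2) (0) (0) (0),
 qmk (0) (0) (0) (0) (0) (0) (2) (0),
 qmk (0) (0) (-2) (0) (0) (0) (0) (0),
 qmk (0) (0) (0) (0) (-2) (0) (0) (0),
 qmk (0) (0) (0) (0) (0) (0) (-2) (0),
 qmk (0) (0) (1) (0) (0) (1) (-1) (1),
 qmk (0) (0) (-1) (1) (1) (0) (0) (1),
 qmk (0) (0) (0) (1) (-1) (1) (1) (0),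
 qmk (0) (0) (1) (0) (0) (1) (1) (-1),
 qmk (0) (0) (1) (-1) (1) (0) (0) (1),
 qmk (0) (0) (0) (1) (1) (-1) (1) (0),
 qmk (0) (0) (1) (0) (0) (-1) (-1) (1),
 qmk (0) (0) (-1) (1) (1) (0) (0) (-1),
 qmk (0) (0) (0) (-1) (-1) (1) (1) (0),
 qmk (0) (0) (1) (0) (0) (-1) (1) (-1),
 qmk (0) (0) (1) (-1) (1) (0) (0) (-1),
 qmk (0) (0) (0) (-1) (1) (-1) (1) (0),
 qmk (0) (0) (-1) (0) (0) (1) (-1) (1),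
 qmk (0) (0) (-1) (1) (-1) (0) (0) (1),
 qmk (0) (0) (0) (1) (-1) (1) (-1) (0),
 qmk (0) (0) (-1) (0) (0) (1) (1) (-1),
 qmk (0) (0) (1) (-1) (-1) (0) (0) (1),
 qmk (0) (0) (0) (1) (1) (-1) (-1) (0),
 qmk (0) (0) (-1) (0) (0) (-1) (-1) (1),
 qmk (0) (0) (-1) (1) (-1) (0) (0) (-1),
 qmk (0) (0) (0) (-1) (-1) (1) (-1) (0),
 qmk (0) (0) (-1) (0) (0) (-1) (1) (-1),
 qmk (0) (0) (1) (-1) (-1) (0) (0) (-1),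
 qmk (0) (0) (0) (-1) (1) (-1) (-1) (0)]
instance {R : Type} [DecidableEq R] [Zero R] [One R] [Neg R] : DecidableEq (Quaternion R) :=
  fun a b => decidable_of_iff
    (a.re = b.re ∧ a.imI = b.imI ∧ a.imJ = b.imJ ∧ a.imK = b.imK)
    (by constructor
        · rintro ⟨h1,h2,h3,h4⟩; exact QuaternionAlgebra.ext h1 h2 h3 h4
        · rintro rfl; exact ⟨rfl,rfl,rfl,rfl⟩)

def g₁ : Quaternion (Gold ℤ) := qmk (1) (0) (1) (0) (1) (0) (1) (0)
def g₂ : Quaternion (Gold ℤ) := qmk (0) (1) (1) (0) (-1) (1) (0) (0)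
def qe : Quaternion (Gold ℤ) := qmk (2) (0) (0) (0) (0) (0) (0) (0)

def dblL : List (Quaternion (Gold ℤ)) :=
[qmk (-4) (0) (0) (0) (0) (0) (0) (0),
 qmk (-2) (0) (-2) (0) (-2) (0) (-2) (0),
 qmk (-2) (0) (-2) (0) (-2) (0) (2) (0),
 qmk (-2) (0) (-2) (0) (2) (0) (-2) (0),
 qmk (-2) (0) (-2) (0) (2) (0) (2) (0),
 qmk (-2) (0) (-2) (2) (0) (-2) (0) (0),
 qmk (-2) (0) (-2) (2) (0) (2) (0) (0),
 qmk (-2) (0) (0) (-2) (0) (0) (-2) (2),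
 qmk (-2) (0) (0) (-2) (0) (0) (2) (-2),
 qmk (-2) (0) (0) (0) (-2) (2) (0) (-2),
 qmk (-2) (0) (0) (0) (-2) (2) (0) (2),
 qmk (-2) (0) (0) (0) (2) (-2) (0) (-2),
 qmk (-2) (0) (0) (0) (2) (-2) (0) (2),
 qmk (-2) (0) (0) (2) (0) (0) (-2) (2),
 qmk (-2) (0) (0) (2) (0) (0) (2) (-2),
 qmk (-2) (0) (2) (-2) (0) (-2) (0) (0),
 qmk (-2) (0) (2) (-2) (0) (2) (0) (0),
 qmk (-2) (0) (2) (0) (-2) (0) (-2) (0),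
 qmk (-2) (0) (2) (0) (-2) (0) (2) (0),
 qmk (-2) (0) (2) (0) (2) (0) (-2) (0),
 qmk (-2) (0) (2) (0) (2) (0) (2) (0),
 qmk (-2) (2) (-2) (0) (0) (0) (0) (-2),
 qmk (-2) (2) (-2) (0) (0) (0) (0) (2),
 qmk (-2) (2) (0) (-2) (-2) (0) (0) (0),
 qmk (-2) (2) (0) (-2) (2) (0) (0) (0),
 qmk (-2) (2) (0) (0) (0) (-2) (-2) (0),
 qmk (-2) (2) (0) (0) (0) (-2) (2) (0),
 qmk (-2) (2) (0) (0) (0) (2) (-2) (0),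
 qmk (-2) (2) (0) (0) (0) (2) (2) (0),
 qmk (-2) (2) (0) (2) (-2) (0) (0) (0),
 qmk (-2) (2) (0) (2) (2) (0) (0) (0),
 qmk (-2) (2) (2) (0) (0) (0) (0) (-2),
 qmk (-2) (2) (2) (0) (0) (0) (0) (2),
 qmk (0) (-2) (-2) (0) (-2) (2) (0) (0),
 qmk (0) (-2) (-2) (0) (2) (-2) (0) (0),
 qmk (0) (-2) (-2) (2) (0) (0) (-2) (0),
 qmk (0) (-2) (-2) (2) (0) (0) (2) (0),
 qmk (0) (-2) (0) (0) (-2) (0) (-2) (2),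
 qmk (0) (-2) (0) (0) (-2) (0) (2) (-2),
 qmk (0) (-2) (0) (0) (2) (0) (-2) (2),
 qmk (0) (-2) (0) (0) (2) (0) (2) (-2),
 qmk (0) (-2) (2) (-2) (0) (0) (-2) (0),
 qmk (0) (-2) (2) (-2) (0) (0) (2) (0),
 qmk (0) (-2) (2) (0) (-2) (2) (0) (0),
 qmk (0) (-2) (2) (0) (2) (-2) (0) (0),
 qmk (0) (0) (-4) (0) (0) (0) (0) (0),
 qmk (0) (0) (-2) (0) (0) (-2) (-2) (2),
 qmk (0) (0) (-2) (0) (0) (-2) (2) (-2),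
 qmk (0) (0) (-2) (0) (0) (2) (-2) (2),
 qmk (0) (0) (-2) (0) (0) (2) (2) (-2),
 qmk (0) (0) (-2) (2) (-2) (0) (0) (-2),
 qmk (0) (0) (-2) (2) (-2) (0) (0) (2),
 qmk (0) (0) (-2) (2) (2) (0) (0) (-2),
 qmk (0) (0) (-2) (2) (2) (0) (0) (2),
 qmk (0) (0) (0) (-2) (-2) (2) (-2) (0),
 qmk (0) (0) (0) (-2) (-2) (2) (2) (0),
 qmk (0) (0) (0) (-2) (2) (-2) (-2) (0),
 qmk (0) (0) (0) (-2) (2) (-2) (2) (0),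
 qmk (0) (0) (0) (0) (-4) (0) (0) (0),
 qmk (0) (0) (0) (0) (0) (0) (-4) (0),
 qmk (0) (0) (0) (0) (0) (0) (4) (0),
 qmk (0) (0) (0) (0) (4) (0) (0) (0),
 qmk (0) (0) (0) (2) (-2) (2) (-2) (0),
 qmk (0) (0) (0) (2) (-2) (2) (2) (0),
 qmk (0) (0) (0) (2) (2) (-2) (-2) (0),
 qmk (0) (0) (0) (2) (2) (-2) (2) (0),
 qmk (0) (0) (2) (-2) (-2) (0) (0) (-2),
 qmk (0) (0) (2) (-2) (-2) (0) (0) (2),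
 qmk (0) (0) (2) (-2) (2) (0) (0) (-2),
 qmk (0) (0) (2) (-2) (2) (0) (0) (2),
 qmk (0) (0) (2) (0) (0) (-2) (-2) (2),
 qmk (0) (0) (2) (0) (0) (-2) (2) (-2),
 qmk (0) (0) (2) (0) (0) (2) (-2) (2),
 qmk (0) (0) (2) (0) (0) (2) (2) (-2),
 qmk (0) (0) (4) (0) (0) (0) (0) (0),
 qmk (0) (2) (-2) (0) (-2) (2) (0) (0),
 qmk (0) (2) (-2) (0) (2) (-2) (0) (0),
 qmk (0) (2) (-2) (2) (0) (0) (-2) (0),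
 qmk (0) (2) (-2) (2) (0) (0) (2) (0),
 qmk (0) (2) (0) (0) (-2) (0) (-2) (2),
 qmk (0) (2) (0) (0) (-2) (0) (2) (-2),
 qmk (0) (2) (0) (0) (2) (0) (-2) (2),
 qmk (0) (2) (0) (0) (2) (0) (2) (-2),
 qmk (0) (2) (2) (-2) (0) (0) (-2) (0),
 qmk (0) (2) (2) (-2) (0) (0) (2) (0),
 qmk (0) (2) (2) (0) (-2) (2) (0) (0),
 qmk (0) (2) (2) (0) (2) (-2) (0) (0),
 qmk (2) (-2) (-2) (0) (0) (0) (0) (-2),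
 qmk (2) (-2) (-2) (0) (0) (0) (0) (2),
 qmk (2) (-2) (0) (-2) (-2) (0) (0) (0),
 qmk (2) (-2) (0) (-2) (2) (0) (0) (0),
 qmk (2) (-2) (0) (0) (0) (-2) (-2) (0),
 qmk (2) (-2) (0) (0) (0) (-2) (2) (0),
 qmk (2) (-2) (0) (0) (0) (2) (-2) (0),
 qmk (2) (-2) (0) (0) (0) (2) (2) (0),
 qmk (2) (-2) (0) (2) (-2) (0) (0) (0),
 qmk (2) (-2) (0) (2) (2) (0) (0) (0),
 qmk (2) (-2) (2) (0) (0) (0) (0) (-2),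
 qmk (2) (-2) (2) (0) (0) (0) (0) (2),
 qmk (2) (0) (-2) (0) (-2) (0) (-2) (0),
 qmk (2) (0) (-2) (0) (-2) (0) (2) (0),
 qmk (2) (0) (-2) (0) (2) (0) (-2) (0),
 qmk (2) (0) (-2) (0) (2) (0) (2) (0),
 qmk (2) (0) (-2) (2) (0) (-2) (0) (0),
 qmk (2) (0) (-2) (2) (0) (2) (0) (0),
 qmk (2) (0) (0) (-2) (0) (0) (-2) (2),
 qmk (2) (0) (0) (-2) (0) (0) (2) (-2),
 qmk (2) (0) (0) (0) (-2) (2) (0) (-2),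
 qmk (2) (0) (0) (0) (-2) (2) (0) (2),
 qmk (2) (0) (0) (0) (2) (-2) (0) (-2),
 qmk (2) (0) (0) (0) (2) (-2) (0) (2),
 qmk (2) (0) (0) (2) (0) (0) (-2) (2),
 qmk (2) (0) (0) (2) (0) (0) (2) (-2),
 qmk (2) (0) (2) (-2) (0) (-2) (0) (0),
 qmk (2) (0) (2) (-2) (0) (2) (0) (0),
 qmk (2) (0) (2) (0) (-2) (0) (-2) (0),
 qmk (2) (0) (2) (0) (-2) (0) (2) (0),
 qmk (2) (0) (2) (0) (2) (0) (-2) (0),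
 qmk (2) (0) (2) (0) (2) (0) (2) (0),
 qmk (4) (0) (0) (0) (0) (0) (0) (0)]

set_option maxRecDepth 100000 in
theorem dblL_eq : dblL = L₂.map (fun z => z + z) := by decide

set_option maxRecDepth 100000 in
theorem Pg1' : ∀ y ∈ L₂, g₁ * y ∈ dblL := by decide

set_option maxRecDepth 100000 in
theorem Pg2' : ∀ y ∈ L₂, g₂ * y ∈ dblL := by decide

set_option maxRecDepth 100000 in
theorem starFact : ∀ x ∈ L₂, x * star x = qe + qe ∧ star x ∈ L₂ := by decide

set_option maxRecDepth 100000 in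
theorem rootsSub : ∀ x ∈ R30, x ∈ L₂ := by decide

set_option maxRecDepth 100000 in
theorem eMem : qe ∈ L₂ := by decide

/-- witnesses: (2z, x, y) with x*y = 2z, x,y roots -/
def W5 : List (Quaternion (Gold ℤ) × Quaternion (Gold ℤ) × Quaternion (Gold ℤ)) :=
[(qmk (-4) (0) (0) (0) (0) (0) (0) (0), qmk (0) (0) (2) (0) (0) (0) (0) (0), qmk (0) (0) (2) (0) (0) (0) (0) (0)),
 (qmk (-2) (0) (-2) (0) (-2) (0) (-2) (0), qmk (0) (0) (1) (0) (0) (-1) (-1) (1), qmk (0) (0) (1) (-1) (-1) (0) (0) (1)),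
 (qmk (-2) (0) (-2) (0) (-2) (0) (2) (0), qmk (0) (0) (-1) (1) (1) (0) (0) (1), qmk (0) (0) (-1) (0) (0) (1) (-1) (1)),
 (qmk (-2) (0) (-2) (0) (2) (0) (-2) (0), qmk (0) (0) (1) (0) (0) (1) (-1) (1), qmk (0) (0) (0) (1) (-1) (1) (-1) (0)),
 (qmk (-2) (0) (-2) (0) (2) (0) (2) (0), qmk (0) (0) (0) (1) (-1) (1) (1) (0), qmk (0) (0) (1) (0) (0) (1) (1) (-1)),
 (qmk (-2) (0) (-2) (2) (0) (-2) (0) (0), qmk (0) (0) (0) (0) (0) (0) (2) (0), qmk (0) (0) (0) (-1) (1) (-1) (1) (0)),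
 (qmk (-2) (0) (-2) (2) (0) (2) (0) (0), qmk (0) (0) (0) (0) (0) (0) (2) (0), qmk (0) (0) (0) (1) (1) (-1) (1) (0)),
 (qmk (-2) (0) (0) (-2) (0) (0) (-2) (2), qmk (0) (0) (0) (0) (2) (0) (0) (0), qmk (0) (0) (1) (-1) (1) (0) (0) (-1)),
 (qmk (-2) (0) (0) (-2) (0) (0) (2) (-2), qmk (0) (0) (0) (0) (2) (0) (0) (0), qmk (0) (0) (-1) (1) (1) (0) (0) (-1)),
 (qmk (-2) (0) (0) (0) (-2) (2) (0) (-2), qmk (0) (0) (2) (0) (0) (0) (0) (0), qmk (0) (0) (1) (0) (0) (-1) (1) (-1)),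
 (qmk (-2) (0) (0) (0) (-2) (2) (0) (2), qmk (0) (0) (2) (0) (0) (0) (0) (0), qmk (0) (0) (1) (0) (0) (1) (1) (-1)),
 (qmk (-2) (0) (0) (0) (2) (-2) (0) (-2), qmk (0) (0) (2) (0) (0) (0) (0) (0), qmk (0) (0) (1) (0) (0) (-1) (-1) (1)),
 (qmk (-2) (0) (0) (0) (2) (-2) (0) (2), qmk (0) (0) (2) (0) (0) (0) (0) (0), qmk (0) (0) (1) (0) (0) (1) (-1) (1)),
 (qmk (-2) (0) (0) (2) (0) (0) (-2) (2), qmk (0) (0) (0) (0) (2) (0) (0) (0), qmk (0) (0) (1) (-1) (1) (0) (0) (1)),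
 (qmk (-2) (0) (0) (2) (0) (0) (2) (-2), qmk (0) (0) (0) (0) (2) (0) (0) (0), qmk (0) (0) (-1) (1) (1) (0) (0) (1)),
 (qmk (-2) (0) (2) (-2) (0) (-2) (0) (0), qmk (0) (0) (0) (0) (0) (0) (2) (0), qmk (0) (0) (0) (-1) (-1) (1) (1) (0)),
 (qmk (-2) (0) (2) (-2) (0) (2) (0) (0), qmk (0) (0) (0) (0) (0) (0) (2) (0), qmk (0) (0) (0) (1) (-1) (1) (1) (0)),
 (qmk (-2) (0) (2) (0) (-2) (0) (-2) (0), qmk (0) (0) (0) (1) (-1) (1) (1) (0), qmk (0) (0) (-1) (1) (-1) (0) (0) (1)),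
 (qmk (-2) (0) (2) (0) (-2) (0) (2) (0), qmk (0) (0) (1) (0) (0) (1) (-1) (1), qmk (0) (0) (1) (-1) (1) (0) (0) (1)),
 (qmk (-2) (0) (2) (0) (2) (0) (-2) (0), qmk (0) (0) (-1) (1) (1) (0) (0) (1), qmk (0) (0) (0) (1) (1) (-1) (1) (0)),
 (qmk (-2) (0) (2) (0) (2) (0) (2) (0), qmk (0) (0) (1) (0) (0) (-1) (-1) (1), qmk (0) (0) (0) (1) (1) (-1) (-1) (0)),
 (qmk (-2) (2) (-2) (0) (0) (0) (0) (-2), qmk (0) (0) (0) (0) (2) (0) (0) (0), qmk (0) (0) (0) (1) (1) (-1) (-1) (0)),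
 (qmk (-2) (2) (-2) (0) (0) (0) (0) (2), qmk (0) (0) (0) (0) (2) (0) (0) (0), qmk (0) (0) (0) (-1) (1) (-1) (-1) (0)),
 (qmk (-2) (2) (0) (-2) (-2) (0) (0) (0), qmk (0) (0) (0) (0) (0) (0) (2) (0), qmk (0) (0) (-1) (0) (0) (1) (1) (-1)),
 (qmk (-2) (2) (0) (-2) (2) (0) (0) (0), qmk (0) (0) (0) (0) (0) (0) (2) (0), qmk (0) (0) (1) (0) (0) (1) (1) (-1)),
 (qmk (-2) (2) (0) (0) (0) (-2) (-2) (0), qmk (0) (0) (2) (0) (0) (0) (0) (0), qmk (0) (0) (1) (-1) (-1) (0) (0) (1)),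
 (qmk (-2) (2) (0) (0) (0) (-2) (2) (0), qmk (0) (0) (2) (0) (0) (0) (0) (0), qmk (0) (0) (1) (-1) (1) (0) (0) (1)),
 (qmk (-2) (2) (0) (0) (0) (2) (-2) (0), qmk (0) (0) (2) (0) (0) (0) (0) (0), qmk (0) (0) (1) (-1) (-1) (0) (0) (-1)),
 (qmk (-2) (2) (0) (0) (0) (2) (2) (0), qmk (0) (0) (2) (0) (0) (0) (0) (0), qmk (0) (0) (1) (-1) (1) (0) (0) (-1)),
 (qmk (-2) (2) (0) (2) (-2) (0) (0) (0), qmk (0) (0) (0) (0) (0) (0) (2) (0), qmk (0) (0) (-1) (0) (0) (-1) (1) (-1)),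
 (qmk (-2) (2) (0) (2) (2) (0) (0) (0), qmk (0) (0) (0) (0) (0) (0) (2) (0), qmk (0) (0) (1) (0) (0) (-1) (1) (-1)),
 (qmk (-2) (2) (2) (0) (0) (0) (0) (-2), qmk (0) (0) (0) (0) (2) (0) (0) (0), qmk (0) (0) (0) (1) (1) (-1) (1) (0)),
 (qmk (-2) (2) (2) (0) (0) (0) (0) (2), qmk (0) (0) (0) (0) (2) (0) (0) (0), qmk (0) (0) (0) (-1) (1) (-1) (1) (0)),
 (qmk (0) (-2) (-2) (0) (-2) (2) (0) (0), qmk (0) (0) (0) (0) (0) (0) (2) (0), qmk (0) (0) (-1) (1) (1) (0) (0) (1)),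
 (qmk (0) (-2) (-2) (0) (2) (-2) (0) (0), qmk (0) (0) (0) (0) (0) (0) (2) (0), qmk (0) (0) (1) (-1) (1) (0) (0) (1)),
 (qmk (0) (-2) (-2) (2) (0) (0) (-2) (0), qmk (0) (0) (0) (0) (2) (0) (0) (0), qmk (0) (0) (1) (0) (0) (1) (-1) (1)),
 (qmk (0) (-2) (-2) (2) (0) (0) (2) (0), qmk (0) (0) (0) (0) (2) (0) (0) (0), qmk (0) (0) (-1) (0) (0) (1) (-1) (1)),
 (qmk (0) (-2) (0) (0) (-2) (0) (-2) (2), qmk (0) (0) (2) (0) (0) (0) (0) (0), qmk (0) (0) (0) (1) (-1) (1) (1) (0)),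
 (qmk (0) (-2) (0) (0) (-2) (0) (2) (-2), qmk (0) (0) (2) (0) (0) (0) (0) (0), qmk (0) (0) (0) (1) (1) (-1) (1) (0)),
 (qmk (0) (-2) (0) (0) (2) (0) (-2) (2), qmk (0) (0) (2) (0) (0) (0) (0) (0), qmk (0) (0) (0) (1) (-1) (1) (-1) (0)),
 (qmk (0) (-2) (0) (0) (2) (0) (2) (-2), qmk (0) (0) (2) (0) (0) (0) (0) (0), qmk (0) (0) (0) (1) (1) (-1) (-1) (0)),
 (qmk (0) (-2) (2) (-2) (0) (0) (-2) (0), qmk (0) (0) (0) (0) (2) (0) (0) (0), qmk (0) (0) (1) (0) (0) (1) (1) (-1)),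
 (qmk (0) (-2) (2) (-2) (0) (0) (2) (0), qmk (0) (0) (0) (0) (2) (0) (0) (0), qmk (0) (0) (-1) (0) (0) (1) (1) (-1)),
 (qmk (0) (-2) (2) (0) (-2) (2) (0) (0), qmk (0) (0) (0) (0) (0) (0) (2) (0), qmk (0) (0) (-1) (1) (-1) (0) (0) (1)),
 (qmk (0) (-2) (2) (0) (2) (-2) (0) (0), qmk (0) (0) (0) (0) (0) (0) (2) (0), qmk (0) (0) (1) (-1) (-1) (0) (0) (1)),
 (qmk (0) (0) (-4) (0) (0) (0) (0) (0), qmk (0) (0) (0) (0) (2) (0) (0) (0), qmk (0) (0) (0) (0) (0) (0) (-2) (0)),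
 (qmk (0) (0) (-2) (0) (0) (-2) (-2) (2), qmk (0) (0) (1) (-1) (1) (0) (0) (1), qmk (0) (0) (0) (-1) (-1) (1) (-1) (0)),
 (qmk (0) (0) (-2) (0) (0) (-2) (2) (-2), qmk (0) (0) (0) (-1) (-1) (1) (1) (0), qmk (0) (0) (1) (-1) (1) (0) (0) (-1)),
 (qmk (0) (0) (-2) (0) (0) (2) (-2) (2), qmk (0) (0) (0) (1) (-1) (1) (1) (0), qmk (0) (0) (-1) (1) (1) (0) (0) (-1)),
 (qmk (0) (0) (-2) (0) (0) (2) (2) (-2), qmk (0) (0) (-1) (1) (1) (0) (0) (1), qmk (0) (0) (0) (1) (-1) (1) (-1) (0)),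
 (qmk (0) (0) (-2) (2) (-2) (0) (0) (-2), qmk (0) (0) (1) (0) (0) (1) (1) (-1), qmk (0) (0) (0) (1) (1) (-1) (1) (0)),
 (qmk (0) (0) (-2) (2) (-2) (0) (0) (2), qmk (0) (0) (1) (0) (0) (1) (-1) (1), qmk (0) (0) (0) (-1) (-1) (1) (1) (0)),
 (qmk (0) (0) (-2) (2) (2) (0) (0) (-2), qmk (0) (0) (0) (1) (-1) (1) (1) (0), qmk (0) (0) (1) (0) (0) (-1) (1) (-1)),
 (qmk (0) (0) (-2) (2) (2) (0) (0) (2), qmk (0) (0) (1) (0) (0) (-1) (-1) (1), qmk (0) (0) (0) (1) (-1) (1) (-1) (0)),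
 (qmk (0) (0) (0) (-2) (-2) (2) (-2) (0), qmk (0) (0) (1) (0) (0) (1) (1) (-1), qmk (0) (0) (-1) (1) (-1) (0) (0) (-1)),
 (qmk (0) (0) (0) (-2) (-2) (2) (2) (0), qmk (0) (0) (1) (0) (0) (1) (-1) (1), qmk (0) (0) (1) (-1) (1) (0) (0) (-1)),
 (qmk (0) (0) (0) (-2) (2) (-2) (-2) (0), qmk (0) (0) (-1) (1) (1) (0) (0) (-1), qmk (0) (0) (1) (0) (0) (-1) (1) (-1)),
 (qmk (0) (0) (0) (-2) (2) (-2) (2) (0), qmk (0) (0) (-1) (1) (1) (0) (0) (1), qmk (0) (0) (-1) (0) (0) (1) (1) (-1)),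
 (qmk (0) (0) (0) (0) (-4) (0) (0) (0), qmk (0) (0) (2) (0) (0) (0) (0) (0), qmk (0) (0) (0) (0) (0) (0) (2) (0)),
 (qmk (0) (0) (0) (0) (0) (0) (-4) (0), qmk (0) (0) (2) (0) (0) (0) (0) (0), qmk (0) (0) (0) (0) (-2) (0) (0) (0)),
 (qmk (0) (0) (0) (0) (0) (0) (4) (0), qmk (0) (0) (2) (0) (0) (0) (0) (0), qmk (0) (0) (0) (0) (2) (0) (0) (0)),
 (qmk (0) (0) (0) (0) (4) (0) (0) (0), qmk (0) (0) (2) (0) (0) (0) (0) (0), qmk (0) (0) (0) (0) (0) (0) (-2) (0)),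
 (qmk (0) (0) (0) (2) (-2) (2) (-2) (0), qmk (0) (0) (-1) (1) (1) (0) (0) (1), qmk (0) (0) (1) (0) (0) (-1) (-1) (1)),
 (qmk (0) (0) (0) (2) (-2) (2) (2) (0), qmk (0) (0) (-1) (1) (1) (0) (0) (-1), qmk (0) (0) (-1) (0) (0) (1) (-1) (1)),
 (qmk (0) (0) (0) (2) (2) (-2) (-2) (0), qmk (0) (0) (1) (0) (0) (1) (-1) (1), qmk (0) (0) (-1) (1) (-1) (0) (0) (1)),
 (qmk (0) (0) (0) (2) (2) (-2) (2) (0), qmk (0) (0) (1) (0) (0) (1) (1) (-1), qmk (0) (0) (1) (-1) (1) (0) (0) (1)),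
 (qmk (0) (0) (2) (-2) (-2) (0) (0) (-2), qmk (0) (0) (1) (0) (0) (-1) (-1) (1), qmk (0) (0) (0) (-1) (1) (-1) (1) (0)),
 (qmk (0) (0) (2) (-2) (-2) (0) (0) (2), qmk (0) (0) (0) (1) (-1) (1) (1) (0), qmk (0) (0) (-1) (0) (0) (1) (-1) (1)),
 (qmk (0) (0) (2) (-2) (2) (0) (0) (-2), qmk (0) (0) (1) (0) (0) (1) (-1) (1), qmk (0) (0) (0) (1) (1) (-1) (-1) (0)),
 (qmk (0) (0) (2) (-2) (2) (0) (0) (2), qmk (0) (0) (1) (0) (0) (1) (1) (-1), qmk (0) (0) (0) (-1) (-1) (1) (-1) (0)),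
 (qmk (0) (0) (2) (0) (0) (-2) (-2) (2), qmk (0) (0) (-1) (1) (1) (0) (0) (1), qmk (0) (0) (0) (-1) (1) (-1) (1) (0)),
 (qmk (0) (0) (2) (0) (0) (-2) (2) (-2), qmk (0) (0) (0) (1) (-1) (1) (1) (0), qmk (0) (0) (1) (-1) (-1) (0) (0) (1)),
 (qmk (0) (0) (2) (0) (0) (2) (-2) (2), qmk (0) (0) (0) (-1) (-1) (1) (1) (0), qmk (0) (0) (-1) (1) (-1) (0) (0) (1)),
 (qmk (0) (0) (2) (0) (0) (2) (2) (-2), qmk (0) (0) (1) (-1) (1) (0) (0) (1), qmk (0) (0) (0) (1) (1) (-1) (1) (0)),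
 (qmk (0) (0) (4) (0) (0) (0) (0) (0), qmk (0) (0) (0) (0) (2) (0) (0) (0), qmk (0) (0) (0) (0) (0) (0) (2) (0)),
 (qmk (0) (2) (-2) (0) (-2) (2) (0) (0), qmk (0) (0) (0) (0) (0) (0) (2) (0), qmk (0) (0) (-1) (1) (1) (0) (0) (-1)),
 (qmk (0) (2) (-2) (0) (2) (-2) (0) (0), qmk (0) (0) (0) (0) (0) (0) (2) (0), qmk (0) (0) (1) (-1) (1) (0) (0) (-1)),
 (qmk (0) (2) (-2) (2) (0) (0) (-2) (0), qmk (0) (0) (0) (0) (2) (0) (0) (0), qmk (0) (0) (1) (0) (0) (-1) (-1) (1)),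
 (qmk (0) (2) (-2) (2) (0) (0) (2) (0), qmk (0) (0) (0) (0) (2) (0) (0) (0), qmk (0) (0) (-1) (0) (0) (-1) (-1) (1)),
 (qmk (0) (2) (0) (0) (-2) (0) (-2) (2), qmk (0) (0) (2) (0) (0) (0) (0) (0), qmk (0) (0) (0) (-1) (-1) (1) (1) (0)),
 (qmk (0) (2) (0) (0) (-2) (0) (2) (-2), qmk (0) (0) (2) (0) (0) (0) (0) (0), qmk (0) (0) (0) (-1) (1) (-1) (1) (0)),
 (qmk (0) (2) (0) (0) (2) (0) (-2) (2), qmk (0) (0) (2) (0) (0) (0) (0) (0), qmk (0) (0) (0) (-1) (-1) (1) (-1) (0)),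
 (qmk (0) (2) (0) (0) (2) (0) (2) (-2), qmk (0) (0) (2) (0) (0) (0) (0) (0), qmk (0) (0) (0) (-1) (1) (-1) (-1) (0)),
 (qmk (0) (2) (2) (-2) (0) (0) (-2) (0), qmk (0) (0) (0) (0) (2) (0) (0) (0), qmk (0) (0) (1) (0) (0) (-1) (1) (-1)),
 (qmk (0) (2) (2) (-2) (0) (0) (2) (0), qmk (0) (0) (0) (0) (2) (0) (0) (0), qmk (0) (0) (-1) (0) (0) (-1) (1) (-1)),
 (qmk (0) (2) (2) (0) (-2) (2) (0) (0), qmk (0) (0) (0) (0) (0) (0) (2) (0), qmk (0) (0) (-1) (1) (-1) (0) (0) (-1)),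
 (qmk (0) (2) (2) (0) (2) (-2) (0) (0), qmk (0) (0) (0) (0) (0) (0) (2) (0), qmk (0) (0) (1) (-1) (-1) (0) (0) (-1)),
 (qmk (2) (-2) (-2) (0) (0) (0) (0) (-2), qmk (0) (0) (0) (0) (2) (0) (0) (0), qmk (0) (0) (0) (1) (-1) (1) (-1) (0)),
 (qmk (2) (-2) (-2) (0) (0) (0) (0) (2), qmk (0) (0) (0) (0) (2) (0) (0) (0), qmk (0) (0) (0) (-1) (-1) (1) (-1) (0)),
 (qmk (2) (-2) (0) (-2) (-2) (0) (0) (0), qmk (0) (0) (0) (0) (0) (0) (2) (0), qmk (0) (0) (-1) (0) (0) (1) (-1) (1)),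
 (qmk (2) (-2) (0) (-2) (2) (0) (0) (0), qmk (0) (0) (0) (0) (0) (0) (2) (0), qmk (0) (0) (1) (0) (0) (1) (-1) (1)),
 (qmk (2) (-2) (0) (0) (0) (-2) (-2) (0), qmk (0) (0) (2) (0) (0) (0) (0) (0), qmk (0) (0) (-1) (1) (-1) (0) (0) (1)),
 (qmk (2) (-2) (0) (0) (0) (-2) (2) (0), qmk (0) (0) (2) (0) (0) (0) (0) (0), qmk (0) (0) (-1) (1) (1) (0) (0) (1)),
 (qmk (2) (-2) (0) (0) (0) (2) (-2) (0), qmk (0) (0) (2) (0) (0) (0) (0) (0), qmk (0) (0) (-1) (1) (-1) (0) (0) (-1)),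
 (qmk (2) (-2) (0) (0) (0) (2) (2) (0), qmk (0) (0) (2) (0) (0) (0) (0) (0), qmk (0) (0) (-1) (1) (1) (0) (0) (-1)),
 (qmk (2) (-2) (0) (2) (-2) (0) (0) (0), qmk (0) (0) (0) (0) (0) (0) (2) (0), qmk (0) (0) (-1) (0) (0) (-1) (-1) (1)),
 (qmk (2) (-2) (0) (2) (2) (0) (0) (0), qmk (0) (0) (0) (0) (0) (0) (2) (0), qmk (0) (0) (1) (0) (0) (-1) (-1) (1)),
 (qmk (2) (-2) (2) (0) (0) (0) (0) (-2), qmk (0) (0) (0) (0) (2) (0) (0) (0), qmk (0) (0) (0) (1) (-1) (1) (1) (0)),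
 (qmk (2) (-2) (2) (0) (0) (0) (0) (2), qmk (0) (0) (0) (0) (2) (0) (0) (0), qmk (0) (0) (0) (-1) (-1) (1) (1) (0)),
 (qmk (2) (0) (-2) (0) (-2) (0) (-2) (0), qmk (0) (0) (1) (0) (0) (-1) (-1) (1), qmk (0) (0) (0) (-1) (-1) (1) (1) (0)),
 (qmk (2) (0) (-2) (0) (-2) (0) (2) (0), qmk (0) (0) (-1) (1) (1) (0) (0) (1), qmk (0) (0) (0) (-1) (-1) (1) (-1) (0)),
 (qmk (2) (0) (-2) (0) (2) (0) (-2) (0), qmk (0) (0) (1) (0) (0) (1) (-1) (1), qmk (0) (0) (-1) (1) (-1) (0) (0) (-1)),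
 (qmk (2) (0) (-2) (0) (2) (0) (2) (0), qmk (0) (0) (0) (1) (-1) (1) (1) (0), qmk (0) (0) (1) (-1) (1) (0) (0) (-1)),
 (qmk (2) (0) (-2) (2) (0) (-2) (0) (0), qmk (0) (0) (0) (0) (0) (0) (2) (0), qmk (0) (0) (0) (-1) (1) (-1) (-1) (0)),
 (qmk (2) (0) (-2) (2) (0) (2) (0) (0), qmk (0) (0) (0) (0) (0) (0) (2) (0), qmk (0) (0) (0) (1) (1) (-1) (-1) (0)),
 (qmk (2) (0) (0) (-2) (0) (0) (-2) (2), qmk (0) (0) (0) (0) (2) (0) (0) (0), qmk (0) (0) (1) (-1) (-1) (0) (0) (-1)),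
 (qmk (2) (0) (0) (-2) (0) (0) (2) (-2), qmk (0) (0) (0) (0) (2) (0) (0) (0), qmk (0) (0) (-1) (1) (-1) (0) (0) (-1)),
 (qmk (2) (0) (0) (0) (-2) (2) (0) (-2), qmk (0) (0) (2) (0) (0) (0) (0) (0), qmk (0) (0) (-1) (0) (0) (-1) (1) (-1)),
 (qmk (2) (0) (0) (0) (-2) (2) (0) (2), qmk (0) (0) (2) (0) (0) (0) (0) (0), qmk (0) (0) (-1) (0) (0) (1) (1) (-1)),
 (qmk (2) (0) (0) (0) (2) (-2) (0) (-2), qmk (0) (0) (2) (0) (0) (0) (0) (0), qmk (0) (0) (-1) (0) (0) (-1) (-1) (1)),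
 (qmk (2) (0) (0) (0) (2) (-2) (0) (2), qmk (0) (0) (2) (0) (0) (0) (0) (0), qmk (0) (0) (-1) (0) (0) (1) (-1) (1)),
 (qmk (2) (0) (0) (2) (0) (0) (-2) (2), qmk (0) (0) (0) (0) (2) (0) (0) (0), qmk (0) (0) (1) (-1) (-1) (0) (0) (1)),
 (qmk (2) (0) (0) (2) (0) (0) (2) (-2), qmk (0) (0) (0) (0) (2) (0) (0) (0), qmk (0) (0) (-1) (1) (-1) (0) (0) (1)),
 (qmk (2) (0) (2) (-2) (0) (-2) (0) (0), qmk (0) (0) (0) (0) (0) (0) (2) (0), qmk (0) (0) (0) (-1) (-1) (1) (-1) (0)),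
 (qmk (2) (0) (2) (-2) (0) (2) (0) (0), qmk (0) (0) (0) (0) (0) (0) (2) (0), qmk (0) (0) (0) (1) (-1) (1) (-1) (0)),
 (qmk (2) (0) (2) (0) (-2) (0) (-2) (0), qmk (0) (0) (0) (1) (-1) (1) (1) (0), qmk (0) (0) (-1) (0) (0) (-1) (-1) (1)),
 (qmk (2) (0) (2) (0) (-2) (0) (2) (0), qmk (0) (0) (1) (0) (0) (1) (-1) (1), qmk (0) (0) (0) (-1) (1) (-1) (1) (0)),
 (qmk (2) (0) (2) (0) (2) (0) (-2) (0), qmk (0) (0) (-1) (1) (1) (0) (0) (1), qmk (0) (0) (1) (0) (0) (-1) (1) (-1)),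
 (qmk (2) (0) (2) (0) (2) (0) (2) (0), qmk (0) (0) (1) (0) (0) (-1) (-1) (1), qmk (0) (0) (-1) (1) (1) (0) (0) (-1)),
 (qmk (4) (0) (0) (0) (0) (0) (0) (0), qmk (0) (0) (2) (0) (0) (0) (0) (0), qmk (0) (0) (-2) (0) (0) (0) (0) (0))]

set_option maxRecDepth 100000 in
theorem W5a : ∀ t ∈ W5, t.2.1 ∈ R30 ∧ t.2.2 ∈ R30 ∧ t.2.1 * t.2.2 = t.1 := by decide

set_option maxRecDepth 100000 in
theorem W5b : ∀ z ∈ L₂, ∃ t ∈ W5, t.1 = z + z := by decide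
/-! ### Quaternion functorial map -/

def quatMap {R A : Type} [CommRing R] [CommRing A] (f : R →+* A) :
    Quaternion R →+* Quaternion A where
  toFun q := ⟨f q.re, f q.imI, f q.imJ, f q.imK⟩
  map_one' := by ext <;> simp
  map_zero' := by ext <;> simp
  map_mul' x y := by
    ext <;> simp [Quaternion.re_mul, Quaternion.imI_mul, Quaternion.imJ_mul,
      Quaternion.imK_mul] <;> erw [QuaternionAlgebra.mk_mul_mk] <;> simp <;> ring
  map_add' x y := by ext <;> simp <;> erw [QuaternionAlgebra.mk_add_mk]

@[simp] lemma quatMap_re {R A : Type} [CommRing R] [CommRing A] (f : R →+* A)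
    (q : Quaternion R) : (quatMap f q).re = f q.re := rfl
@[simp] lemma quatMap_imI {R A : Type} [CommRing R] [CommRing A] (f : R →+* A)
    (q : Quaternion R) : (quatMap f q).imI = f q.imI := rfl
@[simp] lemma quatMap_imJ {R A : Type} [CommRing R] [CommRing A] (f : R →+* A)
    (q : Quaternion R) : (quatMap f q).imJ = f q.imJ := rfl
@[simp] lemma quatMap_imK {R A : Type} [CommRing R] [CommRing A] (f : R →+* A)
    (q : Quaternion R) : (quatMap f q).imK = f q.imK := rfl

lemma quatMap_star {R A : Type} [CommRing R] [CommRing A] (f : R →+* A)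
    (q : Quaternion R) : quatMap f (star q) = star (quatMap f q) := by
  ext <;> simp

lemma quatMap_injective {R A : Type} [CommRing R] [CommRing A] {f : R →+* A}
    (hf : Function.Injective f) : Function.Injective (quatMap f) := by
  intro x y h
  ext
  · exact hf congr(($h).re)
  · exact hf congr(($h).imI)
  · exact hf congr(($h).imJ)
  · exact hf congr(($h).imK)

/-! ### The embedding of integral (doubled) icosians into `Quaternion (Gold ℚ)` -/

abbrev GI := Gold ℤ
abbrev GQ := Gold ℚ

def ι2 : GI →+* GQ := Gold.lift (Int.castRingHom GQ) ⟨0,1⟩ (by ext <;> simp)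

def Ψ : Quaternion GI →+* Quaternion GQ := quatMap ι2

def cg : GQ := ⟨1/2, 0⟩

def emb (x : Quaternion GI) : Quaternion GQ := (cg : Quaternion GQ) * Ψ x

lemma cc2 : cg * cg + cg * cg = cg := by ext <;> simp [cg] <;> norm_num

lemma coe_mul_coe_mul (c : GQ) (A B : Quaternion GQ) :
    (↑c * A) * (↑c * B) = ↑c * ↑c * (A * B) := by
  rw [mul_assoc, ← mul_assoc A, ← Quaternion.coe_commutes, mul_assoc, ← mul_assoc,
    ← mul_assoc]

lemma emb_mul {x y z : Quaternion GI} (h : x * y = z + z) :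
    emb x * emb y = emb z := by
  unfold emb
  rw [coe_mul_coe_mul, ← map_mul, h, map_add]
  rw [mul_add, ← add_mul, ← Quaternion.coe_mul, ← Quaternion.coe_add, cc2]

lemma emb_star (x : Quaternion GI) : emb (star x) = star (emb x) := by
  unfold emb Ψ
  rw [quatMap_star, star_mul, Quaternion.star_coe, ← Quaternion.coe_commutes]

lemma hc_half : ∀ (m n : ℤ), cg * (ι2 ⟨m, n⟩) = ⟨m/2, n/2⟩ := by
  intro m n; ext <;> simp [cg, ι2, Gold.lift] <;> ring

lemma emb_e : emb qe = 1 := by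
  unfold emb Ψ
  ext <;> simp [Quaternion.re_mul, Quaternion.imI_mul, Quaternion.imJ_mul,
    Quaternion.imK_mul, -Gold.mul_a, -Gold.mul_b] <;> simp [qe, qmk, hc_half] <;> norm_num

/-- recover the integral coordinates -/
def Dq (q : Quaternion GQ) : Quaternion GI :=
  ⟨⟨(2*q.re.a).num, (2*q.re.b).num⟩, ⟨(2*q.imI.a).num, (2*q.imI.b).num⟩,
   ⟨(2*q.imJ.a).num, (2*q.imJ.b).num⟩, ⟨(2*q.imK.a).num, (2*q.imK.b).num⟩⟩

lemma Dq_emb (x : Quaternion GI) : Dq (emb x) = x := by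
  unfold emb Ψ Dq
  ext <;> simp [Quaternion.re_mul, Quaternion.imI_mul, Quaternion.imJ_mul,
      Quaternion.imK_mul, -Gold.mul_a, -Gold.mul_b] <;> obtain ⟨⟨a1,b1⟩,⟨a2,b2⟩,⟨a3,b3⟩,⟨a4,b4⟩⟩ := x <;> simp [hc_half] <;>
    · rw [show ∀ m : ℤ, (2:ℚ) * ((m:ℚ)/2) = (m:ℚ) by intro m; ring]
      exact Rat.num_intCast _

def Pp (x : Quaternion GI) : Prop := ∀ y ∈ L₂, x * y ∈ dblL

lemma gold_cancel {x y : Gold ℤ} (h : x + x = y + y) : x = y := by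
  have ha := congrArg Gold.a h
  have hb := congrArg Gold.b h
  simp only [Gold.add_a, Gold.add_b] at ha hb
  ext <;> omega

lemma two_cancel {a b : Quaternion GI} (h : a + a = b + b) : a = b := by
  have h1 : a.re + a.re = b.re + b.re := by
    rw [← Quaternion.re_add, ← Quaternion.re_add, h]
  have h2 : a.imI + a.imI = b.imI + b.imI := by
    rw [← Quaternion.imI_add, ← Quaternion.imI_add, h]
  have h3 : a.imJ + a.imJ = b.imJ + b.imJ := by
    rw [← Quaternion.imJ_add, ← Quaternion.imJ_add, h]
  have h4 : a.imK + a.imK = b.imK + b.imK := by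
    rw [← Quaternion.imK_add, ← Quaternion.imK_add, h]
  exact QuaternionAlgebra.ext (gold_cancel h1) (gold_cancel h2) (gold_cancel h3)
    (gold_cancel h4)

lemma Pstep {g p x : Quaternion GI} (hg : Pp g) (hp : Pp p) (hx : g * p = x + x) :
    Pp x := by
  intro y hy
  obtain ⟨w, hw, hww⟩ := List.mem_map.1 (dblL_eq ▸ hp y hy)
  obtain ⟨v, hv, hvv⟩ := List.mem_map.1 (dblL_eq ▸ hg w hw)
  have key : x * y + x * y = (v + v) + (v + v) := by
    have h1 : (x + x) * y = g * (p * y) := by rw [← hx, mul_assoc]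
    have h2 : g * (p * y) = g * w + g * w := by rw [← hww, mul_add]
    rw [add_mul] at h1
    rw [h1, h2, hvv]
  have : x * y = v + v := two_cancel key
  rw [dblL_eq]
  exact List.mem_map.2 ⟨v, hv, this.symm⟩

lemma qe_mul (y : Quaternion GI) : qe * y = y + y := by
  have h : qe = 1 + 1 := by decide
  rw [h, add_mul, one_mul]

lemma hE : Pp qe := fun y hy => by
  rw [dblL_eq]; exact List.mem_map.2 ⟨y, hy, (qe_mul y).symm⟩

lemma hG1 : Pp g₁ := Pg1'
lemma hG2 : Pp g₂ := Pg2'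

set_option maxRecDepth 100000 in
theorem allP : ∀ x ∈ L₂, Pp x := by
  have h0 : Pp (qmk (-1) (0) (1) (0) (1) (0) (1) (0)) := Pstep hG1 hG1 (by decide)
  have h1 : Pp (qmk (0) (0) (1) (0) (0) (1) (-1) (1)) := Pstep hG1 hG2 (by decide)
  have h2 : Pp (qmk (0) (0) (0) (1) (-1) (1) (1) (0)) := Pstep hG2 hG1 (by decide)
  have h3 : Pp (qmk (-1) (1) (0) (1) (1) (0) (0) (0)) := Pstep hG2 hG2 (by decide)
  have h4 : Pp (qmk (0) (-1) (-1) (1) (0) (0) (1) (0)) := Pstep hG2 h0 (by decide)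
  have h5 : Pp (qmk (-2) (0) (0) (0) (0) (0) (0) (0)) := Pstep hG1 h0 (by decide)
  have h6 : Pp (qmk (0) (-1) (0) (0) (1) (0) (-1) (1)) := Pstep hG1 h1 (by decide)
  have h7 : Pp (qmk (0) (-1) (1) (0) (-1) (1) (0) (0)) := Pstep hG1 h2 (by decide)
  have h8 : Pp (qmk (-1) (0) (-1) (1) (0) (1) (0) (0)) := Pstep hG1 h3 (by decide)
  have h9 : Pp (qmk (0) (-1) (0) (0) (-1) (0) (1) (-1)) := Pstep hG1 h4 (by decide)
  have h10 : Pp (qmk (-1) (0) (0) (1) (0) (0) (-1) (1)) := Pstep hG2 h2 (by decide)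
  have h11 : Pp (qmk (1) (-1) (0) (1) (1) (0) (0) (0)) := Pstep hG2 h3 (by decide)
  have h12 : Pp (qmk (0) (-1) (0) (0) (-1) (0) (-1) (1)) := Pstep hG2 h4 (by decide)
  have h13 : Pp (qmk (0) (-1) (-1) (0) (1) (-1) (0) (0)) := Pstep hG2 h5 (by decide)
  have h14 : Pp (qmk (0) (-1) (1) (-1) (0) (0) (1) (0)) := Pstep hG2 h6 (by decide)
  have h15 : Pp (qmk (-1) (0) (-1) (0) (-1) (0) (-1) (0)) := Pstep hG2 h9 (by decide)
  have h16 : Pp (qmk (0) (-1) (1) (-1) (0) (0) (-1) (0)) := Pstep hG1 h7 (by decide)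
  have h17 : Pp (qmk (0) (-1) (-1) (0) (-1) (1) (0) (0)) := Pstep hG1 h8 (by decide)
  have h18 : Pp (qmk (0) (0) (1) (-1) (-1) (0) (0) (-1)) := Pstep hG1 h9 (by decide)
  have h19 : Pp (qmk (0) (-1) (-1) (1) (0) (0) (-1) (0)) := Pstep hG1 h10 (by decide)
  have h20 : Pp (qmk (0) (-1) (0) (0) (1) (0) (1) (-1)) := Pstep hG1 h11 (by decide)
  have h21 : Pp (qmk (1) (-1) (0) (0) (0) (-1) (-1) (0)) := Pstep hG1 h12 (by decide)
  have h22 : Pp (qmk (0) (0) (-1) (0) (0) (-1) (1) (-1)) := Pstep hG1 h13 (by decide)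
  have h23 : Pp (qmk (-1) (0) (1) (-1) (0) (-1) (0) (0)) := Pstep hG1 h14 (by decide)
  have h24 : Pp (qmk (1) (0) (-1) (0) (-1) (0) (-1) (0)) := Pstep hG1 h15 (by decide)
  have h25 : Pp (qmk (0) (-1) (1) (0) (1) (-1) (0) (0)) := Pstep hG2 h10 (by decide)
  have h26 : Pp (qmk (1) (-1) (0) (-1) (-1) (0) (0) (0)) := Pstep hG2 h13 (by decide)
  have h27 : Pp (qmk (-1) (0) (-1) (0) (-1) (0) (1) (0)) := Pstep hG2 h14 (by decide)
  have h28 : Pp (qmk (0) (0) (0) (-1) (1) (-1) (-1) (0)) := Pstep hG2 h15 (by decide)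
  have h29 : Pp (qmk (-1) (0) (0) (-1) (0) (0) (1) (-1)) := Pstep hG2 h16 (by decide)
  have h30 : Pp (qmk (-1) (0) (0) (-1) (0) (0) (-1) (1)) := Pstep hG2 h17 (by decide)
  have h31 : Pp (qmk (-1) (1) (-1) (0) (0) (0) (0) (-1)) := Pstep hG2 h18 (by decide)
  have h32 : Pp (qmk (0) (1) (1) (-1) (0) (0) (-1) (0)) := Pstep hG2 h24 (by decide)
  have h33 : Pp (qmk (1) (-1) (-1) (0) (0) (0) (0) (-1)) := Pstep hG1 h19 (by decide)
  have h34 : Pp (qmk (1) (0) (0) (0) (1) (-1) (0) (-1)) := Pstep hG1 h21 (by decide)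
  have h35 : Pp (qmk (0) (1) (0) (0) (-1) (0) (1) (-1)) := Pstep hG1 h22 (by decide)
  have h36 : Pp (qmk (-1) (1) (0) (0) (0) (-1) (-1) (0)) := Pstep hG1 h23 (by decide)
  have h37 : Pp (qmk (-1) (0) (0) (0) (1) (-1) (0) (-1)) := Pstep hG1 h25 (by decide)
  have h38 : Pp (qmk (1) (0) (1) (-1) (0) (-1) (0) (0)) := Pstep hG1 h26 (by decide)
  have h39 : Pp (qmk (0) (0) (0) (0) (-2) (0) (0) (0)) := Pstep hG1 h27 (by decide)
  have h40 : Pp (qmk (0) (1) (-1) (0) (1) (-1) (0) (0)) := Pstep hG1 h28 (by decide)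
  have h41 : Pp (qmk (-1) (1) (0) (-1) (-1) (0) (0) (0)) := Pstep hG1 h29 (by decide)
  have h42 : Pp (qmk (0) (0) (-1) (0) (0) (-1) (-1) (1)) := Pstep hG1 h30 (by decide)
  have h43 : Pp (qmk (0) (1) (-1) (0) (-1) (1) (0) (0)) := Pstep hG1 h31 (by decide)
  have h44 : Pp (qmk (0) (1) (0) (0) (1) (0) (-1) (1)) := Pstep hG1 h32 (by decide)
  have h45 : Pp (qmk (1) (0) (0) (-1) (0) (0) (1) (-1)) := Pstep hG2 h28 (by decide)
  have h46 : Pp (qmk (0) (0) (-2) (0) (0) (0) (0) (0)) := Pstep hG2 h29 (by decide)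
  have h47 : Pp (qmk (0) (0) (0) (-1) (1) (-1) (1) (0)) := Pstep hG2 h30 (by decide)
  have h48 : Pp (qmk (1) (0) (-1) (0) (1) (0) (-1) (0)) := Pstep hG2 h31 (by decide)
  have h49 : Pp (qmk (0) (1) (0) (0) (1) (0) (1) (-1)) := Pstep hG2 h32 (by decide)
  have h50 : Pp (qmk (0) (0) (0) (-1) (-1) (1) (-1) (0)) := Pstep hG2 h33 (by decide)
  have h51 : Pp (qmk (1) (0) (0) (0) (-1) (1) (0) (-1)) := Pstep hG2 h34 (by decide)
  have h52 : Pp (qmk (0) (1) (-1) (1) (0) (0) (-1) (0)) := Pstep hG2 h35 (by decide)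
  have h53 : Pp (qmk (0) (1) (1) (0) (1) (-1) (0) (0)) := Pstep hG1 h38 (by decide)
  have h54 : Pp (qmk (1) (0) (1) (0) (-1) (0) (-1) (0)) := Pstep hG1 h39 (by decide)
  have h55 : Pp (qmk (0) (1) (-1) (1) (0) (0) (1) (0)) := Pstep hG1 h40 (by decide)
  have h56 : Pp (qmk (0) (1) (0) (0) (-1) (0) (-1) (1)) := Pstep hG1 h41 (by decide)
  have h57 : Pp (qmk (1) (0) (-1) (1) (0) (-1) (0) (0)) := Pstep hG1 h42 (by decide)
  have h58 : Pp (qmk (1) (0) (0) (0) (-1) (1) (0) (1)) := Pstep hG1 h43 (by decide)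
  have h59 : Pp (qmk (0) (0) (-1) (1) (1) (0) (0) (1)) := Pstep hG1 h44 (by decide)
  have h60 : Pp (qmk (0) (1) (1) (-1) (0) (0) (1) (0)) := Pstep hG1 h45 (by decide)
  have h61 : Pp (qmk (1) (0) (-1) (0) (-1) (0) (1) (0)) := Pstep hG1 h46 (by decide)
  have h62 : Pp (qmk (-1) (1) (0) (0) (0) (-1) (1) (0)) := Pstep hG1 h47 (by decide)
  have h63 : Pp (qmk (1) (0) (-1) (0) (1) (0) (1) (0)) := Pstep hG1 h48 (by decide)
  have h64 : Pp (qmk (-1) (1) (0) (0) (0) (1) (1) (0)) := Pstep hG1 h49 (by decide)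
  have h65 : Pp (qmk (1) (0) (0) (-1) (0) (0) (-1) (1)) := Pstep hG1 h50 (by decide)
  have h66 : Pp (qmk (1) (0) (1) (-1) (0) (1) (0) (0)) := Pstep hG1 h51 (by decide)
  have h67 : Pp (qmk (1) (0) (-1) (1) (0) (1) (0) (0)) := Pstep hG1 h52 (by decide)
  have h68 : Pp (qmk (-1) (1) (0) (-1) (1) (0) (0) (0)) := Pstep hG2 h50 (by decide)
  have h69 : Pp (qmk (-1) (1) (0) (0) (0) (1) (-1) (0)) := Pstep hG2 h51 (by decide)
  have h70 : Pp (qmk (1) (0) (1) (0) (1) (0) (-1) (0)) := Pstep hG2 h52 (by decide)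
  have h71 : Pp (qmk (1) (0) (0) (1) (0) (0) (1) (-1)) := Pstep hG2 h53 (by decide)
  have h72 : Pp (qmk (-1) (1) (1) (0) (0) (0) (0) (-1)) := Pstep hG2 h54 (by decide)
  have h73 : Pp (qmk (1) (0) (0) (1) (0) (0) (-1) (1)) := Pstep hG2 h55 (by decide)
  have h74 : Pp (qmk (-1) (1) (1) (0) (0) (0) (0) (1)) := Pstep hG2 h58 (by decide)
  have h75 : Pp (qmk (1) (-1) (1) (0) (0) (0) (0) (1)) := Pstep hG2 h59 (by decide)
  have h76 : Pp (qmk (1) (0) (1) (0) (-1) (0) (1) (0)) := Pstep hG1 h61 (by decide)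
  have h77 : Pp (qmk (-1) (1) (0) (1) (-1) (0) (0) (0)) := Pstep hG1 h62 (by decide)
  have h78 : Pp (qmk (0) (0) (0) (0) (0) (0) (2) (0)) := Pstep hG1 h63 (by decide)
  have h79 : Pp (qmk (-1) (0) (0) (0) (-1) (1) (0) (1)) := Pstep hG1 h64 (by decide)
  have h80 : Pp (qmk (1) (0) (0) (0) (1) (-1) (0) (1)) := Pstep hG1 h65 (by decide)
  have h81 : Pp (qmk (0) (0) (1) (-1) (1) (0) (0) (1)) := Pstep hG1 h66 (by decide)
  have h82 : Pp (qmk (1) (-1) (0) (0) (0) (1) (1) (0)) := Pstep hG1 h67 (by decide)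
  have h83 : Pp (qmk (-1) (1) (-1) (0) (0) (0) (0) (1)) := Pstep hG1 h68 (by decide)
  have h84 : Pp (qmk (0) (0) (-1) (0) (0) (1) (-1) (1)) := Pstep hG1 h69 (by decide)
  have h85 : Pp (qmk (0) (0) (0) (0) (2) (0) (0) (0)) := Pstep hG1 h70 (by decide)
  have h86 : Pp (qmk (0) (0) (1) (0) (0) (1) (1) (-1)) := Pstep hG1 h71 (by decide)
  have h87 : Pp (qmk (0) (0) (0) (1) (-1) (1) (-1) (0)) := Pstep hG2 h71 (by decide)
  have h88 : Pp (qmk (0) (0) (-1) (1) (1) (0) (0) (-1)) := Pstep hG2 h72 (by decide)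
  have h89 : Pp (qmk (0) (0) (2) (0) (0) (0) (0) (0)) := Pstep hG2 h73 (by decide)
  have h90 : Pp (qmk (0) (0) (0) (1) (1) (-1) (1) (0)) := Pstep hG2 h74 (by decide)
  have h91 : Pp (qmk (-1) (0) (1) (0) (-1) (0) (1) (0)) := Pstep hG2 h75 (by decide)
  have h92 : Pp (qmk (0) (0) (0) (1) (1) (-1) (-1) (0)) := Pstep hG2 h77 (by decide)
  have h93 : Pp (qmk (0) (0) (-1) (1) (-1) (0) (0) (1)) := Pstep hG2 h78 (by decide)
  have h94 : Pp (qmk (-1) (0) (0) (0) (1) (-1) (0) (1)) := Pstep hG2 h79 (by decide)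
  have h95 : Pp (qmk (1) (-1) (-1) (0) (0) (0) (0) (1)) := Pstep hG1 h84 (by decide)
  have h96 : Pp (qmk (-1) (0) (-1) (0) (1) (0) (1) (0)) := Pstep hG1 h85 (by decide)
  have h97 : Pp (qmk (-1) (0) (1) (-1) (0) (1) (0) (0)) := Pstep hG1 h86 (by decide)
  have h98 : Pp (qmk (1) (-1) (0) (0) (0) (1) (-1) (0)) := Pstep hG1 h87 (by decide)
  have h99 : Pp (qmk (0) (0) (-1) (0) (0) (1) (1) (-1)) := Pstep hG1 h88 (by decide)
  have h100 : Pp (qmk (-1) (0) (1) (0) (1) (0) (-1) (0)) := Pstep hG1 h89 (by decide)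
  have h101 : Pp (qmk (-1) (0) (0) (1) (0) (0) (1) (-1)) := Pstep hG1 h90 (by decide)
  have h102 : Pp (qmk (-1) (0) (1) (0) (-1) (0) (-1) (0)) := Pstep hG1 h91 (by decide)
  have h103 : Pp (qmk (1) (-1) (0) (1) (-1) (0) (0) (0)) := Pstep hG1 h93 (by decide)
  have h104 : Pp (qmk (-1) (0) (-1) (1) (0) (-1) (0) (0)) := Pstep hG1 h94 (by decide)
  have h105 : Pp (qmk (1) (-1) (1) (0) (0) (0) (0) (-1)) := Pstep hG2 h92 (by decide)
  have h106 : Pp (qmk (0) (0) (1) (0) (0) (-1) (-1) (1)) := Pstep hG2 h93 (by decide)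
  have h107 : Pp (qmk (1) (-1) (0) (0) (0) (-1) (1) (0)) := Pstep hG2 h94 (by decide)
  have h108 : Pp (qmk (0) (0) (1) (-1) (-1) (0) (0) (1)) := Pstep hG2 h95 (by decide)
  have h109 : Pp (qmk (1) (-1) (0) (-1) (1) (0) (0) (0)) := Pstep hG1 h98 (by decide)
  have h110 : Pp (qmk (0) (0) (0) (-1) (-1) (1) (1) (0)) := Pstep hG1 h99 (by decide)
  have h111 : Pp (qmk (-1) (0) (-1) (0) (1) (0) (-1) (0)) := Pstep hG1 h100 (by decide)
  have h112 : Pp (qmk (-1) (0) (0) (0) (-1) (1) (0) (-1)) := Pstep hG1 h101 (by decide)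
  have h113 : Pp (qmk (0) (0) (0) (0) (0) (0) (-2) (0)) := Pstep hG1 h102 (by decide)
  have h114 : Pp (qmk (0) (0) (-1) (1) (-1) (0) (0) (-1)) := Pstep hG1 h104 (by decide)
  have h115 : Pp (qmk (0) (0) (1) (-1) (1) (0) (0) (-1)) := Pstep hG1 h105 (by decide)
  have h116 : Pp (qmk (0) (0) (1) (0) (0) (-1) (1) (-1)) := Pstep hG1 h107 (by decide)
  intro x hx
  simp only [L₂, List.mem_cons, List.not_mem_nil, or_false] at hx
  rcases hx with rfl|rfl|rfl|rfl|rfl|rfl|rfl|rfl|rfl|rfl|rfl|rfl|rfl|rfl|rfl|rfl|rfl|rfl|rfl|rfl|rfl|rfl|rfl|rfl|rfl|rfl|rfl|rfl|rfl|rfl|rfl|rfl|rfl|rfl|rfl|rfl|rfl|rfl|rfl|rfl|rfl|rfl|rfl|rfl|rfl|rfl|rfl|rfl|rfl|rfl|rfl|rfl|rfl|rfl|rfl|rfl|rfl|rfl|rfl|rfl|rfl|rfl|rfl|rfl|rfl|rfl|rfl|rfl|rfl|rfl|rfl|rfl|rfl|rfl|rfl|rfl|rfl|rfl|rfl|rf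l|rfl|rfl|rfl|rfl|rfl|rfl|rfl|rfl|rfl|rfl|rfl|rfl|rfl|rfl|rfl|rfl|rfl|rfl|rfl|rfl|rfl|rfl|rfl|rfl|rfl|rfl|rfl|rfl|rfl|rfl|rfl|rfl|rfl|rfl|rfl|rfl|rfl|rfl|rfl|rfl
  · exact h5
  · exact h15
  · exact h27
  · exact h111
  · exact h96
  · exact h104
  · exact h8
  · exact h30
  · exact h29
  · exact h112
  · exact h79
  · exact h37
  · exact h94
  · exact h10
  · exact h101
  · exact h23
  · exact h97
  · exact h102
  · exact h91
  · exact h100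
  · exact h0
  · exact h31
  · exact h83
  · exact h41
  · exact h68
  · exact h36
  · exact h62
  · exact h69
  · exact h64
  · exact h77
  · exact h3
  · exact h72
  · exact h74
  · exact h17
  · exact h13
  · exact h19
  · exact h4
  · exact h12
  · exact h9
  · exact h6
  · exact h20
  · exact h16
  · exact h14
  · exact h7
  · exact h25
  · exact h46
  · exact h42
  · exact h22
  · exact h84
  · exact h99
  · exact h114
  · exact h93
  · exact h88
  · exact h59
  · exact h50
  · exact h110
  · exact h28
  · exact h47
  · exact h39
  · exact h113
  · exact h78
  · exact h85
  · exact h87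
  · exact h2
  · exact h92
  · exact h90
  · exact h18
  · exact h108
  · exact h115
  · exact h81
  · exact h106
  · exact h116
  · exact h1
  · exact h86
  · exact h89
  · exact h43
  · exact h40
  · exact h52
  · exact h55
  · exact h56
  · exact h35
  · exact h44
  · exact h49
  · exact h32
  · exact h60
  · exact hG2
  · exact h53
  · exact h33
  · exact h95
  · exact h26
  · exact h109
  · exact h21
  · exact h107
  · exact h98
  · exact h82
  · exact h103
  · exact h11
  · exact h105
  · exact h75
  · exact h24
  · exact h61
  · exact h48
  · exact h63
  · exact h57
  · exact h67
  · exact h65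
  · exact h45
  · exact h51
  · exact h58
  · exact h34
  · exact h80
  · exact h73
  · exact h71
  · exact h38
  · exact h66
  · exact h54
  · exact h76
  · exact h70
  · exact hG1
  · exact hE
/-! ### The subgroup `G₀` of units -/

def LQ : List (Quaternion GQ) := L₂.map emb

lemma mul_star_LQ {a : Quaternion GQ} (h : a ∈ LQ) :
    a * star a = 1 ∧ star a * a = 1 ∧ star a ∈ LQ := by
  obtain ⟨x, hx, rfl⟩ := List.mem_map.1 h
  have hsf := starFact x hx
  have hstar : star x ∈ L₂ := hsf.2
  have h1 : emb x * emb (star x) = emb qe := emb_mul hsf.1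
  have h2 : emb (star x) * emb x = emb qe := by
    have := (starFact (star x) hstar).1
    rw [star_star] at this
    exact emb_mul this
  refine ⟨?_, ?_, ?_⟩
  · rw [← emb_star, h1, emb_e]
  · rw [← emb_star, h2, emb_e]
  · rw [← emb_star]; exact List.mem_map.2 ⟨star x, hstar, rfl⟩

lemma one_mem_LQ : (1 : Quaternion GQ) ∈ LQ :=
  List.mem_map.2 ⟨qe, eMem, emb_e⟩

lemma mul_mem_LQ {a b : Quaternion GQ} (ha : a ∈ LQ) (hb : b ∈ LQ) :
    a * b ∈ LQ := by
  obtain ⟨x, hx, rfl⟩ := List.mem_map.1 ha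
  obtain ⟨y, hy, rfl⟩ := List.mem_map.1 hb
  obtain ⟨z, hz, hzz⟩ := List.mem_map.1 (dblL_eq ▸ allP x hx y hy)
  rw [emb_mul hzz.symm]
  exact List.mem_map.2 ⟨z, hz, rfl⟩

def mkUnit (a : Quaternion GQ) (h : a ∈ LQ) : (Quaternion GQ)ˣ :=
  ⟨a, star a, (mul_star_LQ h).1, (mul_star_LQ h).2.1⟩

def G₀ : Subgroup (Quaternion GQ)ˣ where
  carrier := {u | (u : Quaternion GQ) ∈ LQ}
  mul_mem' ha hb := mul_mem_LQ ha hb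
  one_mem' := one_mem_LQ
  inv_mem' := by
    intro u hu
    have h1 : (u : Quaternion GQ) * star (u : Quaternion GQ) = 1 := (mul_star_LQ hu).1
    have h2 : ((u⁻¹ : (Quaternion GQ)ˣ) : Quaternion GQ) = star (u : Quaternion GQ) :=
      Units.inv_eq_of_mul_eq_one_right h1
    show ((u⁻¹ : (Quaternion GQ)ˣ) : Quaternion GQ) ∈ LQ
    rw [h2]
    exact (mul_star_LQ hu).2.2

lemma mem_G₀ {u : (Quaternion GQ)ˣ} : u ∈ G₀ ↔ (u : Quaternion GQ) ∈ LQ := Iff.rfl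

/-! ### Cardinality of `G₀` -/

lemma emb_injective : Function.Injective emb :=
  Function.LeftInverse.injective Dq_emb

set_option maxRecDepth 100000 in
lemma L₂_nodup : L₂.Nodup := by decide

lemma LQ_nodup : LQ.Nodup := L₂_nodup.map emb_injective

def eqvG₀ : G₀ ≃ {a : Quaternion GQ // a ∈ LQ} where
  toFun u := ⟨(u : (Quaternion GQ)ˣ) , u.2⟩
  invFun s := ⟨mkUnit s.1 s.2, s.2⟩
  left_inv u := Subtype.ext (Units.ext rfl)
  right_inv s := rfl

lemma card_G₀ : Nat.card G₀ = 120 := by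
  rw [Nat.card_congr eqvG₀]
  rw [Nat.card_congr (Equiv.subtypeEquivRight (fun a => (List.mem_toFinset (l := LQ)).symm))]
  rw [Nat.card_eq_fintype_card, Fintype.card_coe, List.toFinset_card_of_nodup LQ_nodup]
  rfl

/-! ### The matrix representation mod 5 -/

def toMat : Quaternion (ZMod 5) →+* Matrix (Fin 2) (Fin 2) (ZMod 5) where
  toFun q := !![q.re + 2*q.imJ, 4*q.imI + 2*q.imK; q.imI + 2*q.imK, q.re + 3*q.imJ]
  map_one' := by
    ext i j
    fin_cases i <;> fin_cases j <;> simp [Matrix.one_apply]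
  map_zero' := by
    ext i j
    fin_cases i <;> fin_cases j <;> simp
  map_add' x y := by
    ext i j
    fin_cases i <;> fin_cases j <;>
      simp [Quaternion.re_add, Quaternion.imI_add, Quaternion.imJ_add,
        Quaternion.imK_add] <;> ring
  map_mul' x y := by
    have h5 : (5 : ZMod 5) = 0 := by decide
    ext i j
    fin_cases i <;> fin_cases j <;>
      simp [Quaternion.re_mul, Quaternion.imI_mul, Quaternion.imJ_mul,
        Quaternion.imK_mul, Matrix.mul_apply, Fin.sum_univ_two]
    · linear_combination ((-1)*x.imI*y.imI + (-1)*x.imJ*y.imJ + (-1)*x.imK*y.imK + (-2)*x.imI*y.imK) * h5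
    · linear_combination ((-2)*y.imJ*x.imK + (-2)*x.imI*y.imJ + (-2)*y.imI*x.imJ) * h5
    · linear_combination ((-1)*x.imJ*y.imK + (-1)*y.imJ*x.imK + (-1)*y.imI*x.imJ) * h5
    · linear_combination ((-1)*x.imI*y.imI + (-2)*x.imJ*y.imJ + (-1)*x.imK*y.imK + (-1)*y.imI*x.imK + (-1)*x.imI*y.imK) * h5

def ι5 : GI →+* ZMod 5 := Gold.lift (Int.castRingHom (ZMod 5)) 3 (by decide)

def gmat (x : Quaternion GI) : Matrix (Fin 2) (Fin 2) (ZMod 5) :=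
  toMat (quatMap ι5 x)

lemma gmat_mul (x y : Quaternion GI) : gmat (x * y) = gmat x * gmat y := by
  unfold gmat
  rw [map_mul, map_mul]
/-! ### The homomorphism `φ : G₀ →* SL(2,5)` -/

abbrev SL25 := Matrix.SpecialLinearGroup (Fin 2) (ZMod 5)

lemma mem_LQ_form {a : Quaternion GQ} (h : a ∈ LQ) :
    Dq a ∈ L₂ ∧ emb (Dq a) = a := by
  obtain ⟨x, hx, rfl⟩ := List.mem_map.1 h
  rw [Dq_emb]
  exact ⟨hx, rfl⟩

set_option maxRecDepth 100000 in
lemma detFact : ∀ x ∈ L₂, ((3:ZMod 5) • gmat x).det = 1 := by decide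

set_option maxRecDepth 100000 in
lemma gmat_qe : (3:ZMod 5) • gmat qe = 1 := by decide

set_option maxRecDepth 100000 in
lemma kerFact : ∀ x ∈ L₂, (3:ZMod 5) • gmat x = 1 → x = qe := by decide

def φ : G₀ →* SL25 where
  toFun u := ⟨(3:ZMod 5) • gmat (Dq ((u : (Quaternion GQ)ˣ) : Quaternion GQ)),
    detFact _ (mem_LQ_form u.2).1⟩
  map_one' := by
    apply Subtype.ext
    show (3:ZMod 5) • gmat (Dq ((1 : Quaternion GQ))) = 1
    rw [show (1 : Quaternion GQ) = emb qe from emb_e.symm, Dq_emb]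
    exact gmat_qe
  map_mul' u v := by
    apply Subtype.ext
    obtain ⟨hu1, hu2⟩ := mem_LQ_form u.2
    obtain ⟨hv1, hv2⟩ := mem_LQ_form v.2
    obtain ⟨z, hz, hzz⟩ := List.mem_map.1 (dblL_eq ▸
      allP _ hu1 _ hv1)
    have hval : ((↑(u * v) : (Quaternion GQ)ˣ) : Quaternion GQ) = emb z := by
      show ((↑u : (Quaternion GQ)ˣ) : Quaternion GQ) *
        ((↑v : (Quaternion GQ)ˣ) : Quaternion GQ) = emb z
      rw [← hu2, ← hv2]
      exact emb_mul hzz.symm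
    show (3:ZMod 5) • gmat (Dq _) = ((3:ZMod 5) • gmat (Dq _)) * ((3:ZMod 5) • gmat (Dq _))
    rw [hval, Dq_emb]
    have hadd : gmat (z + z) = gmat z + gmat z := by
      unfold gmat
      rw [map_add, map_add]
    rw [Matrix.smul_mul, Matrix.mul_smul, smul_smul, ← gmat_mul, ← hzz, hadd,
      smul_add, ← add_smul]
    rw [show ((3:ZMod 5) * 3 + (3:ZMod 5) * 3) = 3 from by decide]

lemma φ_injective : Function.Injective φ := by
  rw [injective_iff_map_eq_one]
  intro u hu
  have h1 : (3:ZMod 5) • gmat (Dq ((u : (Quaternion GQ)ˣ) : Quaternion GQ)) = 1 :=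
    congrArg Subtype.val hu
  obtain ⟨hm, he⟩ := mem_LQ_form u.2
  have h2 := kerFact _ hm h1
  have h3 : ((u : (Quaternion GQ)ˣ) : Quaternion GQ) = 1 := by
    rw [← he, h2, emb_e]
  exact Subtype.ext (Units.ext h3)

/-! ### Surjectivity of `φ` -/

lemma surjHelp {m : Matrix (Fin 2) (Fin 2) (ZMod 5)}
    (h : ∃ x ∈ L₂, (3:ZMod 5) • gmat x = m) :
    ∃ u : G₀, ((φ u : SL25) : Matrix (Fin 2) (Fin 2) (ZMod 5)) = m := by
  obtain ⟨x, hx, hm⟩ := h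
  have hmem : emb x ∈ LQ := List.mem_map.2 ⟨x, hx, rfl⟩
  refine ⟨⟨mkUnit (emb x) hmem, hmem⟩, ?_⟩
  show (3:ZMod 5) • gmat (Dq (emb x)) = m
  rw [Dq_emb]
  exact hm

set_option maxRecDepth 100000 in
lemma diagFact : ∀ D : Fin 2 → ZMod 5, Matrix.det (Matrix.diagonal D) = 1 →
    ∃ x ∈ L₂, (3:ZMod 5) • gmat x = Matrix.diagonal D := by decide

set_option maxRecDepth 100000 in
lemma transFact : ∀ c : ZMod 5,
    (∃ x ∈ L₂, (3:ZMod 5) • gmat x = Matrix.transvection 0 1 c) ∧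
    (∃ x ∈ L₂, (3:ZMod 5) • gmat x = Matrix.transvection 1 0 c) := by decide

instance : Fact (Nat.Prime 5) := ⟨by norm_num⟩

lemma φ_surjective : Function.Surjective φ := by
  intro M
  have key : ∃ u : G₀, ((φ u : SL25) : Matrix (Fin 2) (Fin 2) (ZMod 5)) =
      (M : Matrix (Fin 2) (Fin 2) (ZMod 5)) := by
    apply Matrix.diagonal_transvection_induction
      (P := fun N => ∃ u : G₀, ((φ u : SL25) : Matrix (Fin 2) (Fin 2) (ZMod 5)) = N)
    · intro D hD
      rw [M.2] at hD
      exact surjHelp (diagFact D hD)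
    · rintro ⟨i, j, hij, c⟩
      rw [Matrix.TransvectionStruct.toMatrix_mk]
      fin_cases i <;> fin_cases j
      · exact absurd rfl hij
      · exact surjHelp ((transFact c).1)
      · exact surjHelp ((transFact c).2)
      · exact absurd rfl hij
    · rintro A B ⟨u, hu⟩ ⟨v, hv⟩
      refine ⟨u * v, ?_⟩
      rw [map_mul]
      rw [Matrix.SpecialLinearGroup.coe_mul, hu, hv]
  obtain ⟨u, hu⟩ := key
  exact ⟨u, Subtype.ext hu⟩

noncomputable def φequiv : G₀ ≃* SL25 :=
  MulEquiv.ofBijective φ ⟨φ_injective, φ_surjective⟩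

set_option maxRecDepth 100000 in
lemma card_SL25 : Nat.card SL25 = 120 := by
  rw [Nat.card_eq_fintype_card]
  decide

/-! ### The real side -/

lemma tau_sq : τ * τ = τ + 1 := by
  have h5 : Real.sqrt 5 * Real.sqrt 5 = 5 :=
    Real.mul_self_sqrt (by norm_num)
  unfold τ
  field_simp
  nlinarith [h5]

lemma tau_ne_zero : τ ≠ 0 := by
  have h5 : (0:ℝ) ≤ Real.sqrt 5 := Real.sqrt_nonneg 5
  unfold τ
  intro h
  nlinarith

lemma tau_inv : τ⁻¹ = τ - 1 := by
  have h : τ * (τ - 1) = 1 := by nlinarith [tau_sq]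
  exact inv_eq_of_mul_eq_one_right h

lemma tau_irrational : Irrational τ := by
  have h5 : Irrational (Real.sqrt 5) := (by norm_num : Nat.Prime 5).irrational_sqrt
  have h1 : Irrational ((1:ℚ) + Real.sqrt 5) := h5.ratCast_add 1
  have h2 : Irrational (((1:ℚ) + Real.sqrt 5) / (2:ℕ)) := h1.div_natCast (by norm_num)
  unfold τ
  convert h2 using 2 <;> norm_num

def ιR : GQ →+* ℝ := Gold.lift (Rat.castHom ℝ) τ tau_sq

lemma ιR_mk (p q : ℚ) : ιR ⟨p, q⟩ = (p : ℝ) + (q : ℝ) * τ := rfl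

lemma ιR_injective : Function.Injective ιR := by
  intro x y h
  have h' : (x.a : ℝ) + x.b * τ = y.a + y.b * τ := h
  by_cases hb : x.b = y.b
  · have ha : (x.a : ℝ) = (y.a : ℝ) := by rw [hb] at h'; linarith
    ext
    · exact_mod_cast ha
    · exact hb
  · exfalso
    apply tau_irrational
    have hbb : (y.b : ℝ) - (x.b : ℝ) ≠ 0 := by
      refine sub_ne_zero.2 ?_
      exact_mod_cast Ne.symm hb
    refine ⟨(x.a - y.a) / (y.b - x.b), ?_⟩
    push_cast
    field_simp
    linarith

def Θ : Quaternion GQ →+* Quaternion ℝ := quatMap ιR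

lemma Θ_injective : Function.Injective Θ := quatMap_injective ιR_injective

noncomputable def ThU : (Quaternion GQ)ˣ →* (Quaternion ℝ)ˣ :=
  Units.map (Θ : Quaternion GQ →+* Quaternion ℝ).toMonoidHom

lemma ThU_injective : Function.Injective ThU :=
  Units.map_injective Θ_injective

lemma ThU_val (u : (Quaternion GQ)ˣ) :
    ((ThU u : (Quaternion ℝ)ˣ) : Quaternion ℝ) = Θ ((u : (Quaternion GQ)ˣ) : Quaternion GQ) := rfl

lemma emb_mk (a b c d e f g h : ℤ) :
    emb (qmk a b c d e f g h) =
      ⟨⟨(a:ℚ)/2, (b:ℚ)/2⟩, ⟨(c:ℚ)/2, (d:ℚ)/2⟩, ⟨(e:ℚ)/2, (f:ℚ)/2⟩, ⟨(g:ℚ)/2, (h:ℚ)/2⟩⟩ := by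
  unfold emb Ψ
  ext <;> simp [Quaternion.re_mul, Quaternion.imI_mul, Quaternion.imJ_mul,
    Quaternion.imK_mul, -Gold.mul_a, -Gold.mul_b] <;> simp [qmk, hc_half]

lemma Θemb (a b c d e f g h : ℤ) :
    Θ (emb (qmk a b c d e f g h)) =
      (⟨((a:ℝ) + b * τ)/2, ((c:ℝ) + d * τ)/2, ((e:ℝ) + f * τ)/2, ((g:ℝ) + h * τ)/2⟩ :
        Quaternion ℝ) := by
  rw [emb_mk]
  unfold Θ
  ext <;> (show ιR _ = _) <;> simp [ιR_mk] <;> push_cast <;> ring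

lemma pm_one : (1:ℝ) ∈ pm := Set.mem_insert _ _
lemma pm_neg : (-1:ℝ) ∈ pm := Set.mem_insert_iff.2 (Or.inr rfl)
lemma pm_cases {ε : ℝ} (h : ε ∈ pm) : ε = 1 ∨ ε = -1 := by
  simpa [pm, Set.mem_insert_iff, Set.mem_singleton_iff] using h

lemma val_i (ε : ℝ) : ε • qi = (⟨0, ε, 0, 0⟩ : Quaternion ℝ) := by
  ext <;> simp [Quaternion.re_smul, Quaternion.imI_smul, Quaternion.imJ_smul,
    Quaternion.imK_smul, smul_eq_mul] <;> simp [qi]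
lemma val_j (ε : ℝ) : ε • qj = (⟨0, 0, ε, 0⟩ : Quaternion ℝ) := by
  ext <;> simp [Quaternion.re_smul, Quaternion.imI_smul, Quaternion.imJ_smul,
    Quaternion.imK_smul, smul_eq_mul] <;> simp [qj]
lemma val_k (ε : ℝ) : ε • qk = (⟨0, 0, 0, ε⟩ : Quaternion ℝ) := by
  ext <;> simp [Quaternion.re_smul, Quaternion.imI_smul, Quaternion.imJ_smul,
    Quaternion.imK_smul, smul_eq_mul] <;> simp [qk]

lemma val_c1 (e1 e2 e3 : ℝ) :
    (2 : ℝ)⁻¹ • (e1 • qi + (e2 * τ) • qj + (e3 * τ⁻¹) • qk) =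
      (⟨0, e1/2, e2*τ/2, e3*(τ-1)/2⟩ : Quaternion ℝ) := by
  rw [tau_inv]
  ext <;> simp [Quaternion.re_smul, Quaternion.imI_smul, Quaternion.imJ_smul,
    Quaternion.imK_smul, Quaternion.re_add, Quaternion.imI_add, Quaternion.imJ_add,
    Quaternion.imK_add, smul_eq_mul] <;> simp [qi, qj, qk] <;> ring

lemma val_c2 (e1 e2 e3 : ℝ) :
    (2 : ℝ)⁻¹ • ((e3 * τ⁻¹) • qi + e1 • qj + (e2 * τ) • qk) =
      (⟨0, e3*(τ-1)/2, e1/2, e2*τ/2⟩ : Quaternion ℝ) := by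
  rw [tau_inv]
  ext <;> simp [Quaternion.re_smul, Quaternion.imI_smul, Quaternion.imJ_smul,
    Quaternion.imK_smul, Quaternion.re_add, Quaternion.imI_add, Quaternion.imJ_add,
    Quaternion.imK_add, smul_eq_mul] <;> simp [qi, qj, qk] <;> ring

lemma val_c3 (e1 e2 e3 : ℝ) :
    (2 : ℝ)⁻¹ • ((e2 * τ) • qi + (e3 * τ⁻¹) • qj + e1 • qk) =
      (⟨0, e2*τ/2, e3*(τ-1)/2, e1/2⟩ : Quaternion ℝ) := by
  rw [tau_inv]
  ext <;> simp [Quaternion.re_smul, Quaternion.imI_smul, Quaternion.imJ_smul,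
    Quaternion.imK_smul, Quaternion.re_add, Quaternion.imI_add, Quaternion.imJ_add,
    Quaternion.imK_add, smul_eq_mul] <;> simp [qi, qj, qk] <;> ring

set_option maxHeartbeats 1000000 in
lemma Lmb : ∀ x ∈ R30, Θ (emb x) ∈ rootsH3 := by
  intro x hx
  fin_cases hx
  · refine Or.inl ⟨1, pm_one, Or.inl ?_⟩
    rw [Θemb, val_i]
    ext <;> push_cast <;> ring
  · refine Or.inl ⟨1, pm_one, Or.inr (Or.inl ?_)⟩
    rw [Θemb, val_j]
    ext <;> push_cast <;> ring
  · refine Or.inl ⟨1, pm_one, Or.inr (Or.inr ?_)⟩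
    rw [Θemb, val_k]
    ext <;> push_cast <;> ring
  · refine Or.inl ⟨(-1), pm_neg, Or.inl ?_⟩
    rw [Θemb, val_i]
    ext <;> push_cast <;> ring
  · refine Or.inl ⟨(-1), pm_neg, Or.inr (Or.inl ?_)⟩
    rw [Θemb, val_j]
    ext <;> push_cast <;> ring
  · refine Or.inl ⟨(-1), pm_neg, Or.inr (Or.inr ?_)⟩
    rw [Θemb, val_k]
    ext <;> push_cast <;> ring
  · refine Or.inr ⟨1, pm_one, 1, pm_one, 1, pm_one, Or.inl ?_⟩
    rw [Θemb, val_c1]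
    ext <;> push_cast <;> ring
  · refine Or.inr ⟨1, pm_one, 1, pm_one, 1, pm_one, Or.inr (Or.inl ?_)⟩
    rw [Θemb, val_c2]
    ext <;> push_cast <;> ring
  · refine Or.inr ⟨1, pm_one, 1, pm_one, 1, pm_one, Or.inr (Or.inr ?_)⟩
    rw [Θemb, val_c3]
    ext <;> push_cast <;> ring
  · refine Or.inr ⟨1, pm_one, 1, pm_one, (-1), pm_neg, Or.inl ?_⟩
    rw [Θemb, val_c1]
    ext <;> push_cast <;> ring
  · refine Or.inr ⟨1, pm_one, 1, pm_one, (-1), pm_neg, Or.inr (Or.inl ?_)⟩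
    rw [Θemb, val_c2]
    ext <;> push_cast <;> ring
  · refine Or.inr ⟨1, pm_one, 1, pm_one, (-1), pm_neg, Or.inr (Or.inr ?_)⟩
    rw [Θemb, val_c3]
    ext <;> push_cast <;> ring
  · refine Or.inr ⟨1, pm_one, (-1), pm_neg, 1, pm_one, Or.inl ?_⟩
    rw [Θemb, val_c1]
    ext <;> push_cast <;> ring
  · refine Or.inr ⟨1, pm_one, (-1), pm_neg, 1, pm_one, Or.inr (Or.inl ?_)⟩
    rw [Θemb, val_c2]
    ext <;> push_cast <;> ring
  · refine Or.inr ⟨1, pm_one, (-1), pm_neg, 1, pm_one, Or.inr (Or.inr ?_)⟩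
    rw [Θemb, val_c3]
    ext <;> push_cast <;> ring
  · refine Or.inr ⟨1, pm_one, (-1), pm_neg, (-1), pm_neg, Or.inl ?_⟩
    rw [Θemb, val_c1]
    ext <;> push_cast <;> ring
  · refine Or.inr ⟨1, pm_one, (-1), pm_neg, (-1), pm_neg, Or.inr (Or.inl ?_)⟩
    rw [Θemb, val_c2]
    ext <;> push_cast <;> ring
  · refine Or.inr ⟨1, pm_one, (-1), pm_neg, (-1), pm_neg, Or.inr (Or.inr ?_)⟩
    rw [Θemb, val_c3]
    ext <;> push_cast <;> ring
  · refine Or.inr ⟨(-1), pm_neg, 1, pm_one, 1, pm_one, Or.inl ?_⟩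
    rw [Θemb, val_c1]
    ext <;> push_cast <;> ring
  · refine Or.inr ⟨(-1), pm_neg, 1, pm_one, 1, pm_one, Or.inr (Or.inl ?_)⟩
    rw [Θemb, val_c2]
    ext <;> push_cast <;> ring
  · refine Or.inr ⟨(-1), pm_neg, 1, pm_one, 1, pm_one, Or.inr (Or.inr ?_)⟩
    rw [Θemb, val_c3]
    ext <;> push_cast <;> ring
  · refine Or.inr ⟨(-1), pm_neg, 1, pm_one, (-1), pm_neg, Or.inl ?_⟩
    rw [Θemb, val_c1]
    ext <;> push_cast <;> ring
  · refine Or.inr ⟨(-1), pm_neg, 1, pm_one, (-1), pm_neg, Or.inr (Or.inl ?_)⟩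
    rw [Θemb, val_c2]
    ext <;> push_cast <;> ring
  · refine Or.inr ⟨(-1), pm_neg, 1, pm_one, (-1), pm_neg, Or.inr (Or.inr ?_)⟩
    rw [Θemb, val_c3]
    ext <;> push_cast <;> ring
  · refine Or.inr ⟨(-1), pm_neg, (-1), pm_neg, 1, pm_one, Or.inl ?_⟩
    rw [Θemb, val_c1]
    ext <;> push_cast <;> ring
  · refine Or.inr ⟨(-1), pm_neg, (-1), pm_neg, 1, pm_one, Or.inr (Or.inl ?_)⟩
    rw [Θemb, val_c2]
    ext <;> push_cast <;> ring
  · refine Or.inr ⟨(-1), pm_neg, (-1), pm_neg, 1, pm_one, Or.inr (Or.inr ?_)⟩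
    rw [Θemb, val_c3]
    ext <;> push_cast <;> ring
  · refine Or.inr ⟨(-1), pm_neg, (-1), pm_neg, (-1), pm_neg, Or.inl ?_⟩
    rw [Θemb, val_c1]
    ext <;> push_cast <;> ring
  · refine Or.inr ⟨(-1), pm_neg, (-1), pm_neg, (-1), pm_neg, Or.inr (Or.inl ?_)⟩
    rw [Θemb, val_c2]
    ext <;> push_cast <;> ring
  · refine Or.inr ⟨(-1), pm_neg, (-1), pm_neg, (-1), pm_neg, Or.inr (Or.inr ?_)⟩
    rw [Θemb, val_c3]
    ext <;> push_cast <;> ring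

set_option maxHeartbeats 1000000 in
lemma Lma : ∀ p ∈ rootsH3, ∃ x ∈ R30, p = Θ (emb x) := by
  rintro p (⟨ε, hε, h | h | h⟩ | ⟨e1, h1, e2, h2, e3, h3, h | h | h⟩)
  · subst h
    rcases pm_cases hε with rfl | rfl
    · exact ⟨qmk (0) (0) (2) (0) (0) (0) (0) (0), by decide, by rw [val_i, Θemb]; ext <;> push_cast <;> ring⟩
    · exact ⟨qmk (0) (0) (-2) (0) (0) (0) (0) (0), by decide, by rw [val_i, Θemb]; ext <;> push_cast <;> ring⟩
  · subst h
    rcases pm_cases hε with rfl | rfl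
    · exact ⟨qmk (0) (0) (0) (0) (2) (0) (0) (0), by decide, by rw [val_j, Θemb]; ext <;> push_cast <;> ring⟩
    · exact ⟨qmk (0) (0) (0) (0) (-2) (0) (0) (0), by decide, by rw [val_j, Θemb]; ext <;> push_cast <;> ring⟩
  · subst h
    rcases pm_cases hε with rfl | rfl
    · exact ⟨qmk (0) (0) (0) (0) (0) (0) (2) (0), by decide, by rw [val_k, Θemb]; ext <;> push_cast <;> ring⟩
    · exact ⟨qmk (0) (0) (0) (0) (0) (0) (-2) (0), by decide, by rw [val_k, Θemb]; ext <;> push_cast <;> ring⟩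
  · subst h
    rcases pm_cases h1 with rfl | rfl <;> rcases pm_cases h2 with rfl | rfl <;>
      rcases pm_cases h3 with rfl | rfl
    · exact ⟨qmk (0) (0) (1) (0) (0) (1) (-1) (1), by decide, by rw [val_c1, Θemb]; ext <;> push_cast <;> ring⟩
    · exact ⟨qmk (0) (0) (1) (0) (0) (1) (1) (-1), by decide, by rw [val_c1, Θemb]; ext <;> push_cast <;> ring⟩
    · exact ⟨qmk (0) (0) (1) (0) (0) (-1) (-1) (1), by decide, by rw [val_c1, Θemb]; ext <;> push_cast <;> ring⟩
    · exact ⟨qmk (0) (0) (1) (0) (0) (-1) (1) (-1), by decide, by rw [val_c1, Θemb]; ext <;> push_cast <;> ring⟩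
    · exact ⟨qmk (0) (0) (-1) (0) (0) (1) (-1) (1), by decide, by rw [val_c1, Θemb]; ext <;> push_cast <;> ring⟩
    · exact ⟨qmk (0) (0) (-1) (0) (0) (1) (1) (-1), by decide, by rw [val_c1, Θemb]; ext <;> push_cast <;> ring⟩
    · exact ⟨qmk (0) (0) (-1) (0) (0) (-1) (-1) (1), by decide, by rw [val_c1, Θemb]; ext <;> push_cast <;> ring⟩
    · exact ⟨qmk (0) (0) (-1) (0) (0) (-1) (1) (-1), by decide, by rw [val_c1, Θemb]; ext <;> push_cast <;> ring⟩
  · subst h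
    rcases pm_cases h1 with rfl | rfl <;> rcases pm_cases h2 with rfl | rfl <;>
      rcases pm_cases h3 with rfl | rfl
    · exact ⟨qmk (0) (0) (-1) (1) (1) (0) (0) (1), by decide, by rw [val_c2, Θemb]; ext <;> push_cast <;> ring⟩
    · exact ⟨qmk (0) (0) (1) (-1) (1) (0) (0) (1), by decide, by rw [val_c2, Θemb]; ext <;> push_cast <;> ring⟩
    · exact ⟨qmk (0) (0) (-1) (1) (1) (0) (0) (-1), by decide, by rw [val_c2, Θemb]; ext <;> push_cast <;> ring⟩
    · exact ⟨qmk (0) (0) (1) (-1) (1) (0) (0) (-1), by decide, by rw [val_c2, Θemb]; ext <;> push_cast <;> ring⟩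
    · exact ⟨qmk (0) (0) (-1) (1) (-1) (0) (0) (1), by decide, by rw [val_c2, Θemb]; ext <;> push_cast <;> ring⟩
    · exact ⟨qmk (0) (0) (1) (-1) (-1) (0) (0) (1), by decide, by rw [val_c2, Θemb]; ext <;> push_cast <;> ring⟩
    · exact ⟨qmk (0) (0) (-1) (1) (-1) (0) (0) (-1), by decide, by rw [val_c2, Θemb]; ext <;> push_cast <;> ring⟩
    · exact ⟨qmk (0) (0) (1) (-1) (-1) (0) (0) (-1), by decide, by rw [val_c2, Θemb]; ext <;> push_cast <;> ring⟩
  · subst h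
    rcases pm_cases h1 with rfl | rfl <;> rcases pm_cases h2 with rfl | rfl <;>
      rcases pm_cases h3 with rfl | rfl
    · exact ⟨qmk (0) (0) (0) (1) (-1) (1) (1) (0), by decide, by rw [val_c3, Θemb]; ext <;> push_cast <;> ring⟩
    · exact ⟨qmk (0) (0) (0) (1) (1) (-1) (1) (0), by decide, by rw [val_c3, Θemb]; ext <;> push_cast <;> ring⟩
    · exact ⟨qmk (0) (0) (0) (-1) (-1) (1) (1) (0), by decide, by rw [val_c3, Θemb]; ext <;> push_cast <;> ring⟩
    · exact ⟨qmk (0) (0) (0) (-1) (1) (-1) (1) (0), by decide, by rw [val_c3, Θemb]; ext <;> push_cast <;> ring⟩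
    · exact ⟨qmk (0) (0) (0) (1) (-1) (1) (-1) (0), by decide, by rw [val_c3, Θemb]; ext <;> push_cast <;> ring⟩
    · exact ⟨qmk (0) (0) (0) (1) (1) (-1) (-1) (0), by decide, by rw [val_c3, Θemb]; ext <;> push_cast <;> ring⟩
    · exact ⟨qmk (0) (0) (0) (-1) (-1) (1) (-1) (0), by decide, by rw [val_c3, Θemb]; ext <;> push_cast <;> ring⟩
    · exact ⟨qmk (0) (0) (0) (-1) (1) (-1) (-1) (0), by decide, by rw [val_c3, Θemb]; ext <;> push_cast <;> ring⟩
/-! ### Final assembly -/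

lemma rotor_sub : rotorGenH3 ⊆ (Subgroup.map ThU G₀ : Subgroup (Quaternion ℝ)ˣ) := by
  rintro u ⟨p, hp, q, hq, hu⟩
  obtain ⟨x, hx, hpeq⟩ := Lma p hp
  obtain ⟨y, hy, hqeq⟩ := Lma q hq
  have hembx : emb x ∈ LQ := List.mem_map.2 ⟨x, rootsSub x hx, rfl⟩
  have hemby : emb y ∈ LQ := List.mem_map.2 ⟨y, rootsSub y hy, rfl⟩
  have hmemab : emb x * emb y ∈ LQ := mul_mem_LQ hembx hemby
  refine Subgroup.mem_map.2 ⟨mkUnit _ hmemab, hmemab, ?_⟩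
  apply Units.ext
  rw [ThU_val]
  show Θ (emb x * emb y) = (u : Quaternion ℝ)
  rw [map_mul, ← hpeq, ← hqeq, hu]

lemma mapSub : Subgroup.map ThU G₀ ≤ Subgroup.closure rotorGenH3 := by
  rintro u hu
  obtain ⟨g, hg, rfl⟩ := Subgroup.mem_map.1 hu
  obtain ⟨w, hw, hform⟩ := List.mem_map.1 hg
  obtain ⟨t, htW, ht1⟩ := W5b w hw
  obtain ⟨hta, htb, htc⟩ := W5a t htW
  have hemb : emb t.2.1 * emb t.2.2 = emb w := emb_mul (by rw [htc, ht1])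
  apply Subgroup.subset_closure
  refine ⟨Θ (emb t.2.1), Lmb _ hta, Θ (emb t.2.2), Lmb _ htb, ?_⟩
  rw [ThU_val]
  rw [← hform, ← hemb, map_mul]

lemma hmain : Subgroup.closure rotorGenH3 = Subgroup.map ThU G₀ :=
  le_antisymm ((Subgroup.closure_le _).2 rotor_sub) mapSub

noncomputable def bigIso :
    (Subgroup.closure rotorGenH3 : Subgroup (Quaternion ℝ)ˣ) ≃* SL25 :=
  ((MulEquiv.subgroupCongr hmain).trans
    (Subgroup.equivMapOfInjective G₀ ThU ThU_injective).symm).trans φequiv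

/-- The subgroup of `ℍˣ` generated by all products of pairs of the 30 unit
roots of `H₃` — the binary icosahedral group `2I`, the group of 120 rotors
generated by the reflections of the icosahedral group — has 120 elements and
is isomorphic as a group to `SL(2, ℤ/5ℤ)`. -/
theorem binary_icosahedral_iso_SL2_F5 :
    Nat.card (Subgroup.closure rotorGenH3 : Subgroup (Quaternion ℝ)ˣ) = 120 ∧
    Nonempty ((Subgroup.closure rotorGenH3 : Subgroup (Quaternion ℝ)ˣ)
      ≃* Matrix.SpecialLinearGroup (Fin 2) (ZMod 5)) := by
  constructor
  · rw [Nat.card_congr bigIso.toEquiv]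
    exact card_SL25
  · exact ⟨bigIso⟩
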